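/- arXiv:2504.09331 — 8 statements merged into one kernel-verified Lean document; each statement's English description precedes it below -/
import Mathlib

section
/- There exist universal constants C1, C2 > 0 such that for all real κ with 0 < κ ≤ 1/2 and all natural numbers m ≥ 1, if Z is a chi-squared random variable with m degrees of freedom, then (C1·κ)^m ≤ Pr[Z ≤ κ²·m] ≤ (C2·κ)^m. -/
open MeasureTheory ProbabilityTheory Real
open scoped NNReal ENNReal

/-- The chi-squared distribution with `m` degrees of freedom: law of the sum of squares of
`m` i.i.d. standard Gaussians. -/
noncomputable def chiSq (m : ℕ) : Measure ℝ :=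
  (Measure.pi (fun _ : Fin m => gaussianReal 0 1)).map (fun x => ∑ i, (x i) ^ 2)

/-- Type synonym of `ℝ` carrying the standard Gaussian as its volume measure. -/
def G : Type := ℝ
instance : MeasurableSpace G := (inferInstance : MeasurableSpace ℝ)
noncomputable instance : MeasureSpace G := { volume := gaussianReal 0 1 }
instance : IsProbabilityMeasure (volume : Measure G) :=
  (inferInstance : IsProbabilityMeasure (gaussianReal 0 1))

lemma pi_integral_pow (m : ℕ) (g : ℝ → ℝ) :
    ∫ x : Fin m → ℝ, ∏ i, g (x i) ∂(Measure.pi fun _ : Fin m => gaussianReal 0 1)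
      = (∫ y, g y ∂(gaussianReal 0 1)) ^ m := by
  have h := MeasureTheory.integral_fintype_prod_eq_pow (ι := Fin m) g (μ := gaussianReal 0 1)
  rw [Fintype.card_fin] at h
  exact h

lemma gauss_pdf_le (x : ℝ) : gaussianPDFReal 0 1 x ≤ (Real.sqrt (2 * π))⁻¹ := by
  rw [gaussianPDFReal]
  have h1 : rexp (-(x - 0) ^ 2 / (2 * ((1:ℝ≥0) : ℝ))) ≤ 1 := by
    rw [Real.exp_le_one_iff]
    have : (0:ℝ) ≤ (x - 0) ^ 2 := sq_nonneg _
    simp only [NNReal.coe_one]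
    nlinarith
  have h2 : (0:ℝ) ≤ (Real.sqrt (2 * π * ((1:ℝ≥0) : ℝ)))⁻¹ := by positivity
  calc (Real.sqrt (2 * π * ((1:ℝ≥0) : ℝ)))⁻¹ * rexp (-(x - 0) ^ 2 / (2 * ((1:ℝ≥0) : ℝ)))
      ≤ (Real.sqrt (2 * π * ((1:ℝ≥0) : ℝ)))⁻¹ * 1 := by
        exact mul_le_mul_of_nonneg_left h1 h2
    _ = (Real.sqrt (2 * π))⁻¹ := by norm_num

/-- Laplace transform upper bound for the standard Gaussian. -/
lemma gauss_mgf_le {κ : ℝ} (hκ : 0 < κ) :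
    ∫ y, rexp (-(2 * κ ^ 2)⁻¹ * y ^ 2) ∂(gaussianReal 0 1) ≤ κ := by
  set t : ℝ := (2 * κ ^ 2)⁻¹ with ht
  have htpos : 0 < t := by positivity
  rw [gaussianReal_of_var_ne_zero 0 one_ne_zero]
  have hmeas : Measurable fun x : ℝ => (gaussianPDFReal 0 1 x).toNNReal :=
    (measurable_gaussianPDFReal 0 1).real_toNNReal
  have : (gaussianPDF 0 1) = fun x => ((gaussianPDFReal 0 1 x).toNNReal : ℝ≥0∞) := rfl
  rw [this, integral_withDensity_eq_integral_smul hmeas]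
  have key : ∀ x : ℝ, (gaussianPDFReal 0 1 x).toNNReal • rexp (-t * x ^ 2)
      = gaussianPDFReal 0 1 x * rexp (-t * x ^ 2) := by
    intro x
    rw [NNReal.smul_def, smul_eq_mul, Real.coe_toNNReal _ (gaussianPDFReal_nonneg 0 1 x)]
  simp_rw [key]
  have hint : Integrable (fun x : ℝ => (Real.sqrt (2 * π))⁻¹ * rexp (-t * x ^ 2)) :=
    (integrable_exp_neg_mul_sq htpos).const_mul _
  have hle : ∀ x : ℝ, gaussianPDFReal 0 1 x * rexp (-t * x ^ 2)
      ≤ (Real.sqrt (2 * π))⁻¹ * rexp (-t * x ^ 2) := fun x =>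
    mul_le_mul_of_nonneg_right (gauss_pdf_le x) (Real.exp_nonneg _)
  have hint1 : Integrable (fun x : ℝ => gaussianPDFReal 0 1 x * rexp (-t * x ^ 2)) := by
    refine hint.mono' ?_ ?_
    · exact ((measurable_gaussianPDFReal 0 1).mul
        (((measurable_id.pow_const 2).const_mul (-t)).exp)).aestronglyMeasurable
    · refine Filter.Eventually.of_forall fun x => ?_
      rw [Real.norm_eq_abs, abs_of_nonneg
        (mul_nonneg (gaussianPDFReal_nonneg 0 1 x) (Real.exp_nonneg _))]
      exact hle x
  calc ∫ x, gaussianPDFReal 0 1 x * rexp (-t * x ^ 2)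
      ≤ ∫ x, (Real.sqrt (2 * π))⁻¹ * rexp (-t * x ^ 2) := integral_mono hint1 hint hle
    _ = (Real.sqrt (2 * π))⁻¹ * Real.sqrt (π / t) := by
        rw [integral_const_mul, integral_gaussian]
    _ = κ := by
        rw [← Real.sqrt_inv, ← Real.sqrt_mul (by positivity)]
        have : (2 * π)⁻¹ * (π / t) = κ ^ 2 := by
          rw [ht]
          field_simp
        rw [this, Real.sqrt_sq hκ.le]

/-- Lower bound for the Gaussian measure of `[-κ, κ]`. -/
lemma gauss_interval_ge {κ : ℝ} (hκ : 0 < κ) (hκ2 : κ ≤ 1 / 2) :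
    ENNReal.ofReal (2 / 5 * κ) ≤ gaussianReal 0 1 {y : ℝ | y ^ 2 ≤ κ ^ 2} := by
  have hset : {y : ℝ | y ^ 2 ≤ κ ^ 2} = Set.Icc (-κ) κ := by
    ext x
    simp only [Set.mem_setOf_eq, Set.mem_Icc]
    constructor
    · intro h; constructor <;> nlinarith
    · intro ⟨h1, h2⟩; nlinarith
  rw [hset, gaussianReal_apply_eq_integral 0 one_ne_zero]
  refine ENNReal.ofReal_le_ofReal ?_
  have hpdf_ge : ∀ x ∈ Set.Icc (-κ) κ, (1/5 : ℝ) ≤ gaussianPDFReal 0 1 x := by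
    intro x hx
    rw [gaussianPDFReal]
    simp only [Set.mem_Icc] at hx
    have hx2 : x ^ 2 ≤ (1/4 : ℝ) := by nlinarith
    have h1 : rexp (-(1/8 : ℝ)) ≤ rexp (-(x - 0) ^ 2 / (2 * ((1:ℝ≥0) : ℝ))) := by
      apply Real.exp_le_exp.mpr
      simp only [NNReal.coe_one]
      nlinarith
    have h2 : (7/8 : ℝ) ≤ rexp (-(1/8 : ℝ)) := by
      have := Real.add_one_le_exp (-(1/8 : ℝ))
      linarith
    have h3 : Real.sqrt (2 * π * ((1:ℝ≥0) : ℝ)) ≤ 4 := by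
      simp only [NNReal.coe_one, mul_one]
      have : (2 * π : ℝ) ≤ 16 := by nlinarith [Real.pi_le_four]
      calc Real.sqrt (2 * π) ≤ Real.sqrt 16 := Real.sqrt_le_sqrt this
        _ = 4 := by
            rw [show (16:ℝ) = 4 ^ 2 by norm_num, Real.sqrt_sq (by norm_num)]
    have h4 : (1/4 : ℝ) ≤ (Real.sqrt (2 * π * ((1:ℝ≥0) : ℝ)))⁻¹ := by
      have hpos : (0:ℝ) < Real.sqrt (2 * π * ((1:ℝ≥0) : ℝ)) := by
        simp only [NNReal.coe_one, mul_one]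
        positivity
      rw [le_inv_comm₀ (by norm_num) hpos]
      simpa using h3
    calc (1/5 : ℝ) ≤ 1/4 * (7/8) := by norm_num
      _ ≤ (Real.sqrt (2 * π * ((1:ℝ≥0) : ℝ)))⁻¹ * rexp (-(x - 0) ^ 2 / (2 * ((1:ℝ≥0) : ℝ))) := by
          apply mul_le_mul h4 (by linarith) (by norm_num) (by positivity)
  calc (2/5 : ℝ) * κ = (volume (Set.Icc (-κ) κ)).toReal • (1/5 : ℝ) := by
        rw [Real.volume_Icc, ENNReal.toReal_ofReal (by linarith), smul_eq_mul]; ring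
    _ = ∫ _ in Set.Icc (-κ) κ, (1/5 : ℝ) := (setIntegral_const _).symm
    _ ≤ ∫ x in Set.Icc (-κ) κ, gaussianPDFReal 0 1 x := by
        refine setIntegral_mono_on (integrable_const _)
          ((integrable_gaussianPDFReal 0 1).restrict) measurableSet_Icc hpdf_ge

theorem stmt0 :
    ∃ C1 C2 : ℝ, 0 < C1 ∧ 0 < C2 ∧
      ∀ (κ : ℝ) (m : ℕ), 0 < κ → κ ≤ 1 / 2 → 1 ≤ m →
        (C1 * κ) ^ m ≤ (chiSq m {z | z ≤ κ ^ 2 * m}).toReal ∧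
          (chiSq m {z | z ≤ κ ^ 2 * m}).toReal ≤ (C2 * κ) ^ m := by
  refine ⟨2/5, Real.exp (1/2), by norm_num, Real.exp_pos _, ?_⟩
  intro κ m hκ hκ2 _hm
  set μpi := Measure.pi fun _ : Fin m => gaussianReal 0 1 with hμpi
  have hmeas_sum : Measurable fun x : Fin m → ℝ => ∑ i, x i ^ 2 :=
    Finset.measurable_sum _ fun i _ => (measurable_pi_apply i).pow_const 2
  have hS : MeasurableSet {z : ℝ | z ≤ κ ^ 2 * m} := measurableSet_Iic
  have hmap : chiSq m {z | z ≤ κ ^ 2 * m}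
      = μpi ((fun x : Fin m → ℝ => ∑ i, x i ^ 2) ⁻¹' {z | z ≤ κ ^ 2 * m}) := by
    rw [chiSq, Measure.map_apply hmeas_sum hS]
  set T := (fun x : Fin m → ℝ => ∑ i, x i ^ 2) ⁻¹' {z | z ≤ κ ^ 2 * m} with hT
  have hprob : IsProbabilityMeasure μpi := by rw [hμpi]; infer_instance
  have hTne : μpi T ≠ ⊤ := measure_ne_top _ _
  constructor
  · -- lower bound
    have hsub : (Set.univ.pi fun _ : Fin m => {y : ℝ | y ^ 2 ≤ κ ^ 2}) ⊆ T := by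
      intro x hx
      simp only [Set.mem_pi, Set.mem_univ, Set.mem_setOf_eq, forall_true_left] at hx
      simp only [hT, Set.mem_preimage, Set.mem_setOf_eq]
      calc ∑ i, x i ^ 2 ≤ ∑ _i : Fin m, κ ^ 2 :=
            Finset.sum_le_sum fun i _ => hx i
        _ = κ ^ 2 * m := by
            rw [Finset.sum_const, Finset.card_univ, Fintype.card_fin, nsmul_eq_mul, mul_comm]
    have hpi : μpi (Set.univ.pi fun _ : Fin m => {y : ℝ | y ^ 2 ≤ κ ^ 2})
        = (gaussianReal 0 1 {y : ℝ | y ^ 2 ≤ κ ^ 2}) ^ m := by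
      rw [hμpi, Measure.pi_pi, Finset.prod_const, Finset.card_univ, Fintype.card_fin]
    have hlow : ENNReal.ofReal ((2/5 * κ) ^ m) ≤ μpi T := by
      calc ENNReal.ofReal ((2/5 * κ) ^ m) = ENNReal.ofReal (2/5 * κ) ^ m :=
            ENNReal.ofReal_pow (by positivity) m
        _ ≤ (gaussianReal 0 1 {y : ℝ | y ^ 2 ≤ κ ^ 2}) ^ m :=
            pow_le_pow_left' (gauss_interval_ge hκ hκ2) m
        _ = μpi (Set.univ.pi fun _ : Fin m => {y : ℝ | y ^ 2 ≤ κ ^ 2}) := hpi.symm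
        _ ≤ μpi T := measure_mono hsub
    rw [hmap]
    calc (2/5 * κ) ^ m = (ENNReal.ofReal ((2/5 * κ) ^ m)).toReal :=
          (ENNReal.toReal_ofReal (by positivity)).symm
      _ ≤ (μpi T).toReal := ENNReal.toReal_mono hTne hlow
  · -- upper bound
    set t : ℝ := (2 * κ ^ 2)⁻¹ with ht
    have htpos : 0 < t := by positivity
    set f : (Fin m → ℝ) → ℝ := fun x => rexp (-t * ∑ i, x i ^ 2) with hf
    have hf_nonneg : (0 : (Fin m → ℝ) → ℝ) ≤ᵐ[μpi] f :=
      Filter.Eventually.of_forall fun x => (Real.exp_nonneg _)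
    have hf_meas : Measurable f := (hmeas_sum.const_mul (-t)).exp
    have hf_int : Integrable f μpi := by
      refine (integrable_const (1 : ℝ)).mono' hf_meas.aestronglyMeasurable ?_
      refine Filter.Eventually.of_forall fun x => ?_
      rw [Real.norm_eq_abs, abs_of_nonneg (Real.exp_nonneg _)]
      apply Real.exp_le_one_iff.mpr
      have hsum : (0:ℝ) ≤ ∑ i, x i ^ 2 := Finset.sum_nonneg fun i _ => sq_nonneg _
      nlinarith
    set ε : ℝ := rexp (-(t * (κ ^ 2 * m))) with hε
    have hεpos : 0 < ε := Real.exp_pos _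
    have hset_eq : {x : Fin m → ℝ | ε ≤ f x} = T := by
      ext x
      simp only [Set.mem_setOf_eq, hf, hε, Real.exp_le_exp, hT, Set.mem_preimage,
        neg_mul, neg_le_neg_iff]
      constructor
      · intro h
        have := (mul_le_mul_iff_right₀ htpos).mp h
        linarith
      · intro h
        have := (mul_le_mul_iff_right₀ htpos).mpr h
        linarith
    have hmarkov := mul_meas_ge_le_integral_of_nonneg hf_nonneg hf_int ε
    rw [hset_eq] at hmarkov
    have hprod : ∫ x, f x ∂μpi = (∫ y, rexp (-t * y ^ 2) ∂(gaussianReal 0 1)) ^ m := by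
      have : f = fun x : Fin m → ℝ => ∏ i, rexp (-t * x i ^ 2) := by
        funext x
        rw [hf]
        simp only
        rw [Finset.mul_sum, ← Real.exp_sum]
      rw [this, hμpi, pi_integral_pow m (fun y => rexp (-t * y ^ 2))]
    have hI_nonneg : (0:ℝ) ≤ ∫ y, rexp (-t * y ^ 2) ∂(gaussianReal 0 1) :=
      integral_nonneg fun y => Real.exp_nonneg _
    have hI_le : ∫ y, rexp (-t * y ^ 2) ∂(gaussianReal 0 1) ≤ κ := by
      rw [ht]; exact gauss_mgf_le hκ
    have hint_le : ∫ x, f x ∂μpi ≤ κ ^ m := by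
      rw [hprod]
      exact pow_le_pow_left₀ hI_nonneg hI_le m
    have hP : ε * (μpi T).toReal ≤ κ ^ m := le_trans hmarkov hint_le
    have hεinv : ε⁻¹ = rexp (1/2) ^ m := by
      rw [hε, ← Real.exp_neg, neg_neg]
      have harg : t * (κ ^ 2 * m) = (m : ℝ) * (1/2) := by
        rw [ht]
        field_simp
      rw [harg, Real.exp_nat_mul]
    rw [hmap]
    calc (μpi T).toReal = ε⁻¹ * (ε * (μpi T).toReal) := by
          field_simp
      _ ≤ ε⁻¹ * κ ^ m := by
          apply mul_le_mul_of_nonneg_left hP (by positivity)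
      _ = (rexp (1/2) * κ) ^ m := by rw [hεinv, mul_pow]
end

section
/- For all natural numbers m ≥ 1 and all reals γ, r > 0, the number of points of the scaled lattice γ·Z^m inside the closed Euclidean ball of radius r in R^m is at most (r·√(2πe)/(γ·√m) + √(2πe)/2)^m. -/
open MeasureTheory
open Real

lemma aux_fact (n : ℕ) : (n : ℝ) ^ n ≤ (n.factorial : ℝ) * Real.exp n := by
  have h := Real.pow_div_factorial_le_exp (x := (n:ℝ)) (Nat.cast_nonneg n) n
  have hf : (0:ℝ) < (n.factorial : ℝ) := by positivity
  calc (n:ℝ)^n = ((n:ℝ)^n / (n.factorial : ℝ)) * (n.factorial : ℝ) := by field_simp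
  _ ≤ Real.exp n * (n.factorial : ℝ) := by gcongr
  _ = (n.factorial : ℝ) * Real.exp n := mul_comm _ _

lemma aux_half (n : ℕ) : ((n:ℝ) + 1/2) ^ n ≤ (n.factorial : ℝ) * Real.exp ((n:ℝ) + 1/2) := by
  rcases Nat.eq_zero_or_pos n with h0 | h1
  · subst h0; simpa using Real.one_le_exp (by norm_num)
  · have hn : (0:ℝ) < n := by exact_mod_cast h1
    have h2 : ((n:ℝ) + 1/2) ^ n = (n:ℝ)^n * (1 + 1/(2*n))^n := by
      rw [← mul_pow]; congr 1; field_simp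
    have h3 : (1 + 1/(2*(n:ℝ)))^n ≤ Real.exp (1/2) := by
      have hb : (1:ℝ) + 1/(2*n) ≤ Real.exp (1/(2*n)) := by
        have := Real.add_one_le_exp (1/(2*(n:ℝ))); linarith
      calc (1 + 1/(2*(n:ℝ)))^n ≤ Real.exp (1/(2*n)) ^ n := by
            apply pow_le_pow_left₀ (by positivity) hb
        _ = Real.exp ((1/(2*n)) * n) := by rw [← Real.exp_nat_mul]; ring_nf
        _ = Real.exp (1/2) := by congr 1; field_simp
    calc ((n:ℝ) + 1/2) ^ n = (n:ℝ)^n * (1 + 1/(2*n))^n := h2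
      _ ≤ ((n.factorial : ℝ) * Real.exp n) * Real.exp (1/2) := by
          apply mul_le_mul (aux_fact n) h3 (by positivity) (by positivity)
      _ = (n.factorial : ℝ) * Real.exp ((n:ℝ) + 1/2) := by rw [mul_assoc, ← Real.exp_add]

lemma gamma_lb (m : ℕ) (hm : 1 ≤ m) :
    ((m:ℝ)/(2*Real.exp 1)) ^ ((m:ℝ)/2) ≤ Real.Gamma ((m:ℝ)/2 + 1) := by
  rcases Nat.even_or_odd m with ⟨n, hn⟩ | ⟨n, hn⟩
  · -- m = 2n
    subst hn
    have hn1 : 1 ≤ n := by omega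
    have hnp : (0:ℝ) < n := by exact_mod_cast hn1
    have h2 : ((n + n : ℕ):ℝ)/2 = (n:ℝ) := by push_cast; ring
    rw [h2]
    rw [show ((n:ℝ)+1) = ((n:ℕ):ℝ)+1 from rfl, Real.Gamma_nat_eq_factorial]
    rw [Real.rpow_natCast]
    have := aux_fact n
    have he : Real.exp (n:ℝ) = Real.exp 1 ^ n := by
      rw [← Real.exp_nat_mul]; ring_nf
    rw [div_pow]
    rw [div_le_iff₀ (by positivity)]
    calc ((n+n:ℕ):ℝ)^n = (2*(n:ℝ))^n := by push_cast; ring_nf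
      _ = 2^n * (n:ℝ)^n := by rw [mul_pow]
      _ ≤ 2^n * ((n.factorial:ℝ) * Real.exp n) := by gcongr
      _ = (n.factorial:ℝ) * (2*Real.exp 1)^n := by rw [he, mul_pow]; ring
  · -- m = 2n+1
    subst hn
    set x : ℝ := (n:ℝ) + 1/2 with hx
    have hxpos : (0:ℝ) < x := by positivity
    have hm2 : ((2*n+1 : ℕ):ℝ)/2 = x := by push_cast [hx]; ring
    rw [hm2]
    have hG1 : Real.Gamma (x+1) = x * Real.Gamma x := Real.Gamma_add_one (ne_of_gt hxpos)
    have hGpos : 0 < Real.Gamma x := Real.Gamma_pos_of_pos hxpos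
    have hGpos1 : 0 < Real.Gamma (x+1) := Real.Gamma_pos_of_pos (by positivity)
    -- log-convexity: Γ(n+1) ≤ Γ(x)^(1/2) Γ(x+1)^(1/2)
    have hconv := Real.Gamma_mul_add_mul_le_rpow_Gamma_mul_rpow_Gamma
      (s := x) (t := x+1) (a := 1/2) (b := 1/2) hxpos (by positivity)
      (by norm_num) (by norm_num) (by norm_num)
    have hmid : (1/2)*x + (1/2)*(x+1) = ((n:ℕ):ℝ) + 1 := by rw [hx]; push_cast; ring
    rw [hmid, Real.Gamma_nat_eq_factorial] at hconv
    -- square it: (n!)^2 ≤ Γ(x) * Γ(x+1)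
    have hsq : ((n.factorial:ℝ))^2 ≤ Real.Gamma x * Real.Gamma (x+1) := by
      have h1 : (Real.Gamma x ^ (1/2:ℝ) * Real.Gamma (x+1) ^ (1/2:ℝ))^2
          = Real.Gamma x * Real.Gamma (x+1) := by
        rw [mul_pow, ← Real.rpow_natCast (Real.Gamma x ^ (1/2:ℝ)) 2,
          ← Real.rpow_natCast (Real.Gamma (x+1) ^ (1/2:ℝ)) 2,
          ← Real.rpow_mul hGpos.le, ← Real.rpow_mul hGpos1.le]
        norm_num
      calc ((n.factorial:ℝ))^2 ≤ (Real.Gamma x ^ (1/2:ℝ) * Real.Gamma (x+1) ^ (1/2:ℝ))^2 := by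
            apply pow_le_pow_left₀ (by positivity) hconv
        _ = _ := h1
    -- so Γ(x+1)^2 ≥ x * (n!)^2
    have hsq2 : x * ((n.factorial:ℝ))^2 ≤ Real.Gamma (x+1)^2 := by
      have : Real.Gamma x = Real.Gamma (x+1) / x := by rw [hG1]; field_simp
      rw [this] at hsq
      calc x * ((n.factorial:ℝ))^2 ≤ x * (Real.Gamma (x+1)/x * Real.Gamma (x+1)) := by gcongr
        _ = Real.Gamma (x+1)^2 := by field_simp
    -- and x * (n!)^2 ≥ (x/e)^(2n+1)
    have hkey : (x/Real.exp 1)^(2*n+1) ≤ x * ((n.factorial:ℝ))^2 := by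
      have h1 := aux_half n
      have h2 : x^(2*n) ≤ ((n.factorial:ℝ))^2 * Real.exp (2*x) := by
        have := mul_le_mul h1 h1 (by positivity) (by positivity)
        calc x^(2*n) = x^n * x^n := by rw [← pow_add]; ring_nf
          _ ≤ ((n.factorial:ℝ) * Real.exp x) * ((n.factorial:ℝ) * Real.exp x) := this
          _ = ((n.factorial:ℝ))^2 * (Real.exp x * Real.exp x) := by ring
          _ = ((n.factorial:ℝ))^2 * Real.exp (2*x) := by
              rw [← Real.exp_add]; ring_nf
      have hx2 : Real.exp (2*x) = Real.exp 1 ^ (2*n+1) := by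
        rw [← Real.exp_nat_mul]; congr 1; rw [hx]; push_cast; ring
      rw [div_pow, div_le_iff₀ (by positivity)]
      calc x^(2*n+1) = x^(2*n) * x := by ring
        _ ≤ (((n.factorial:ℝ))^2 * Real.exp (2*x)) * x := by gcongr
        _ = x * ((n.factorial:ℝ))^2 * Real.exp 1 ^ (2*n+1) := by rw [hx2]; ring
    -- combine and take square roots
    have hfinal : ((x/Real.exp 1) ^ x)^2 ≤ Real.Gamma (x+1)^2 := by
      have hXpos : (0:ℝ) < x / Real.exp 1 := by positivity
      have : ((x/Real.exp 1) ^ x)^2 = (x/Real.exp 1)^(2*n+1) := by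
        rw [← Real.rpow_natCast ((x/Real.exp 1) ^ x) 2, ← Real.rpow_mul hXpos.le,
          ← Real.rpow_natCast (x/Real.exp 1) (2*n+1)]
        congr 1; rw [hx]; push_cast; ring
      rw [this]; exact le_trans hkey hsq2
    have hXx : (0:ℝ) ≤ (x/Real.exp 1) ^ x := Real.rpow_nonneg (by positivity) _
    have hEq : ((2*n+1 : ℕ):ℝ)/(2*Real.exp 1) = x / Real.exp 1 := by
      rw [hx]; push_cast; field_simp
    rw [hEq]
    exact (pow_le_pow_iff_left₀ hXx hGpos1.le (by norm_num)).mp hfinal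

lemma coord_le_norm {m : ℕ} (x : EuclideanSpace ℝ (Fin m)) (i : Fin m) : |x i| ≤ ‖x‖ := by
  rw [EuclideanSpace.norm_eq, ← Real.sqrt_sq_eq_abs]
  apply Real.sqrt_le_sqrt
  apply Finset.single_le_sum (f := fun j => ‖x j‖^2) (fun j _ => by positivity) (Finset.mem_univ i)
    |>.trans_eq' ?_
  rw [Real.norm_eq_abs, sq_abs]

open MeasureTheory in
theorem stmt3 (m : ℕ) (hm : 1 ≤ m) (γ r : ℝ) (hγ : 0 < γ) (hr : 0 < r) :
    (({x : EuclideanSpace ℝ (Fin m) | (∀ i, ∃ k : ℤ, x i = γ * k) ∧ ‖x‖ ≤ r}).ncard : ℝ) ≤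
      (r * Real.sqrt (2 * Real.pi * Real.exp 1) / (γ * Real.sqrt m) +
        Real.sqrt (2 * Real.pi * Real.exp 1) / 2) ^ m := by
  classical
  have hπ := Real.pi_pos
  set c : ℝ := Real.sqrt (2 * Real.pi * Real.exp 1) with hc
  have hcpos : 0 < c := Real.sqrt_pos.mpr (by positivity)
  have hmpos : (0:ℝ) < m := by exact_mod_cast hm
  have hsm : 0 < Real.sqrt m := Real.sqrt_pos.mpr hmpos
  set S := {x : EuclideanSpace ℝ (Fin m) | (∀ i, ∃ k : ℤ, x i = γ * k) ∧ ‖x‖ ≤ r} with hS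
  -- S is finite
  have hfin : S.Finite := by
    have hsub : S ⊆ (fun k : Fin m → ℤ => (WithLp.toLp 2 (fun i => γ * k i) : EuclideanSpace ℝ (Fin m))) ''
        (Set.pi Set.univ fun _ : Fin m => Set.Icc (-⌈r/γ⌉) ⌈r/γ⌉) := by
      rintro x ⟨hx1, hx2⟩
      refine ⟨fun i => (hx1 i).choose, fun i _ => ?_, ?_⟩
      · have hxi : x i = γ * (hx1 i).choose := (hx1 i).choose_spec
        have h1 : |x i| ≤ r := le_trans (coord_le_norm x i) hx2
        have h2 : |((hx1 i).choose : ℝ)| ≤ r/γ := by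
          rw [hxi, abs_mul, abs_of_pos hγ] at h1
          rw [le_div_iff₀ hγ]; linarith
        have h3 : |((hx1 i).choose : ℝ)| ≤ (⌈r/γ⌉ : ℝ) := h2.trans (Int.le_ceil _)
        have h4 : |(hx1 i).choose| ≤ ⌈r/γ⌉ := by exact_mod_cast h3
        exact abs_le.mp h4
      · ext i
        exact ((hx1 i).choose_spec).symm
    exact Set.Finite.subset (Set.Finite.image _ (Set.Finite.pi fun _ => Set.finite_Icc _ _)) hsub
  set R : ℝ := r + γ * Real.sqrt m / 2 with hR
  have hRpos : 0 < R := by positivity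
  have hGpos : 0 < Real.Gamma ((m:ℝ)/2 + 1) := Real.Gamma_pos_of_pos (by positivity)
  -- packing bound
  have hcount : (S.ncard : ℝ) * γ ^ m ≤
      R ^ m * ((Real.sqrt π)^m / Real.Gamma ((m:ℝ)/2+1)) := by
    haveI : Nonempty (Fin m) := Fin.pos_iff_nonempty.mp (by omega)
    set F := hfin.toFinset with hF
    set E := (MeasurableEquiv.toLp 2 (Fin m → ℝ)).symm with hE
    set cube : EuclideanSpace ℝ (Fin m) → Set (EuclideanSpace ℝ (Fin m)) :=
      fun x => E ⁻¹' (Set.pi Set.univ fun i => Set.Ico (x i - γ/2) (x i + γ/2)) with hcube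
    have hmemcube : ∀ x y : EuclideanSpace ℝ (Fin m),
        y ∈ cube x ↔ ∀ i, x i - γ/2 ≤ y i ∧ y i < x i + γ/2 := by
      intro x y
      simp [hcube, hE, Set.mem_preimage, Set.mem_univ_pi,
        MeasurableEquiv.coe_toLp_symm, Set.mem_Ico]
    have hmeas : ∀ x, MeasurableSet (cube x) := fun x =>
      E.measurable (MeasurableSet.univ_pi fun i => measurableSet_Ico)
    have hvol : ∀ x, volume (cube x) = ENNReal.ofReal γ ^ m := by
      intro x
      rw [hcube]
      rw [(EuclideanSpace.volume_preserving_symm_measurableEquiv_toLp (Fin m)).measure_preimage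
        (MeasurableSet.univ_pi fun i => measurableSet_Ico).nullMeasurableSet]
      rw [volume_pi_pi]
      have heach : ∀ i : Fin m, volume (Set.Ico (x i - γ/2) (x i + γ/2))
          = ENNReal.ofReal γ := by
        intro i; rw [Real.volume_Ico]; congr 1; ring
      simp_rw [heach]
      rw [Finset.prod_const, Finset.card_univ, Fintype.card_fin]
    have hdisj : (↑F : Set (EuclideanSpace ℝ (Fin m))).PairwiseDisjoint cube := by
      intro a ha b hb hab
      have haS : a ∈ S := hfin.mem_toFinset.mp ha
      have hbS : b ∈ S := hfin.mem_toFinset.mp hb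
      obtain ⟨i, hi⟩ : ∃ i, a i ≠ b i := by
        by_contra h; push_neg at h; exact hab (PiLp.ext h)
      obtain ⟨ka, hka⟩ := haS.1 i
      obtain ⟨kb, hkb⟩ := hbS.1 i
      have hk : ka ≠ kb := by rintro rfl; exact hi (by rw [hka, hkb])
      have hdist : γ ≤ |a i - b i| := by
        rw [hka, hkb, ← mul_sub, abs_mul, abs_of_pos hγ]
        have h1 : (1:ℝ) ≤ |((ka - kb : ℤ) : ℝ)| := by
          exact_mod_cast Int.one_le_abs (sub_ne_zero.mpr hk)
        push_cast at h1
        nlinarith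
      rw [Function.onFun, Set.disjoint_left]
      intro y hya hyb
      have h1 := (hmemcube a y).mp hya i
      have h2 := (hmemcube b y).mp hyb i
      rcases abs_cases (a i - b i) with ⟨h3, _⟩ | ⟨h3, _⟩ <;> rw [h3] at hdist <;> linarith
    have hsubB : ∀ x ∈ F, cube x ⊆ Metric.closedBall (0 : EuclideanSpace ℝ (Fin m)) R := by
      intro x hx y hy
      have hxS : x ∈ S := hfin.mem_toFinset.mp hx
      have hy' := (hmemcube x y).mp hy
      have hdiff : ‖y - x‖ ≤ γ * Real.sqrt m / 2 := by
        rw [EuclideanSpace.norm_eq]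
        have hbound : ∀ i : Fin m, ‖(y - x) i‖^2 ≤ (γ/2)^2 := by
          intro i
          have h := hy' i
          have habs : |(y - x) i| ≤ γ/2 := by
            have hyx : (y - x) i = y i - x i := rfl
            rw [hyx, abs_le]; constructor <;> linarith [h.1, h.2]
          calc ‖(y-x) i‖^2 = |(y-x) i|^2 := by rw [Real.norm_eq_abs]
            _ ≤ (γ/2)^2 := by
                apply pow_le_pow_left₀ (abs_nonneg _) habs
        calc Real.sqrt (∑ i, ‖(y-x) i‖^2)
              ≤ Real.sqrt (∑ _i : Fin m, (γ/2)^2) :=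
              Real.sqrt_le_sqrt (Finset.sum_le_sum fun i _ => hbound i)
          _ = Real.sqrt ((m:ℝ) * (γ/2)^2) := by
              rw [Finset.sum_const, Finset.card_univ, Fintype.card_fin, nsmul_eq_mul]
          _ = Real.sqrt m * (γ/2) := by
              rw [Real.sqrt_mul (by positivity), Real.sqrt_sq (by positivity)]
          _ = γ * Real.sqrt m / 2 := by ring
      rw [Metric.mem_closedBall, dist_zero_right]
      calc ‖y‖ = ‖x + (y - x)‖ := by rw [show x + (y-x) = y by abel]
        _ ≤ ‖x‖ + ‖y - x‖ := norm_add_le _ _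
        _ ≤ r + γ * Real.sqrt m / 2 := add_le_add hxS.2 hdiff
    have hunion : ∑ x ∈ F, volume (cube x) ≤
        volume (Metric.closedBall (0:EuclideanSpace ℝ (Fin m)) R) := by
      rw [← measure_biUnion_finset hdisj (fun x _ => hmeas x)]
      exact measure_mono (Set.iUnion₂_subset hsubB)
    rw [Finset.sum_congr rfl (fun x _ => hvol x), Finset.sum_const, nsmul_eq_mul,
      EuclideanSpace.volume_closedBall, Fintype.card_fin] at hunion
    have hA : (0:ℝ) ≤ (Real.sqrt π)^m / Real.Gamma ((m:ℝ)/2+1) := by positivity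
    have hcast : ((m:ℝ)) = (Fintype.card (Fin m) : ℝ) := by simp
    rw [show ((F.card : ENNReal)) = ENNReal.ofReal (F.card : ℝ) by
        rw [ENNReal.ofReal_natCast],
      show (ENNReal.ofReal γ) ^ m = ENNReal.ofReal (γ ^ m) by
        rw [ENNReal.ofReal_pow hγ.le],
      ← ENNReal.ofReal_mul (by positivity),
      show (ENNReal.ofReal R) ^ m = ENNReal.ofReal (R ^ m) by
        rw [ENNReal.ofReal_pow hRpos.le],
      ← ENNReal.ofReal_mul (by positivity)] at hunion
    have := (ENNReal.ofReal_le_ofReal_iff (by positivity)).mp hunion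
    rw [Set.ncard_eq_toFinset_card S hfin]
    exact this
  -- final arithmetic
  have hgam : (Real.sqrt m * Real.sqrt π / c) ^ m ≤ Real.Gamma ((m:ℝ)/2 + 1) := by
    have h1 := gamma_lb m hm
    have h2 : ((m:ℝ)/(2*Real.exp 1)) ^ ((m:ℝ)/2)
        = (Real.sqrt ((m:ℝ)/(2*Real.exp 1))) ^ m := by
      rw [Real.sqrt_eq_rpow, ← Real.rpow_natCast (((m:ℝ)/(2*Real.exp 1)) ^ (1/2:ℝ)) m,
        ← Real.rpow_mul (by positivity)]
      congr 1; ring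
    have h3 : Real.sqrt ((m:ℝ)/(2*Real.exp 1)) = Real.sqrt m * Real.sqrt π / c := by
      rw [hc, ← Real.sqrt_mul (by positivity), ← Real.sqrt_div (by positivity)]
      congr 1
      field_simp
    rw [h2, h3] at h1
    exact h1
  have h2 : (Real.sqrt π)^m / Real.Gamma ((m:ℝ)/2+1) ≤ (c / Real.sqrt m)^m := by
    rw [div_le_iff₀ hGpos]
    calc (Real.sqrt π)^m = ((c/Real.sqrt m) * (Real.sqrt m * Real.sqrt π/c))^m := by
          congr 1; field_simp
      _ = (c/Real.sqrt m)^m * (Real.sqrt m * Real.sqrt π/c)^m := mul_pow _ _ _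
      _ ≤ (c/Real.sqrt m)^m * Real.Gamma ((m:ℝ)/2+1) := by
          apply mul_le_mul_of_nonneg_left hgam (by positivity)
  have h3 : (S.ncard : ℝ) ≤ (R * (c / Real.sqrt m) / γ)^m := by
    rw [div_pow, le_div_iff₀ (by positivity), mul_pow]
    calc (S.ncard:ℝ) * γ^m ≤ R^m * ((Real.sqrt π)^m / Real.Gamma ((m:ℝ)/2+1)) := hcount
      _ ≤ R^m * (c/Real.sqrt m)^m := by
          apply mul_le_mul_of_nonneg_left h2 (by positivity)
  calc (S.ncard:ℝ) ≤ (R * (c/Real.sqrt m)/γ)^m := h3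
    _ = (r * c/(γ*Real.sqrt m) + c/2)^m := by
        congr 1; rw [hR]; field_simp
end

section
/- For every ρ with 0 < ρ ≤ 1/2 and every natural number n ≥ 1, the n-dimensional Euclidean ball of radius √(ρn) (around any center) contains at most exp(C·n·ρ·log(1/ρ)) integer points, for some universal constant C. -/
open Finset

lemma geo_aux {ρ : ℝ} (hρ : 0 < ρ) (hρ2 : ρ ≤ 1/2) (N : ℕ) :
    ∑ m ∈ Finset.Icc 1 N, ρ ^ m ≤ 2 * ρ := by
  have key : ∑ m ∈ Finset.Icc 1 N, ρ ^ m ≤ 2 * ρ * (1 - ρ ^ N) := by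
    induction N with
    | zero => simp
    | succ N ih =>
      rw [Finset.sum_Icc_succ_top (by omega)]
      have hp : 0 < ρ ^ N := pow_pos hρ N
      have e1 : ρ ^ (N+1) = ρ ^ N * ρ := pow_succ ρ N
      nlinarith [pow_pos hρ (N+1), mul_le_mul_of_nonneg_left hρ2 (le_of_lt hp)]
  nlinarith [pow_pos hρ N]

lemma absSum_aux {ρ : ℝ} (hρ : 0 < ρ) (hρ2 : ρ ≤ 1/2) (F : Finset ℤ) :
    ∑ j ∈ F, ρ ^ j.natAbs ≤ 1 + 4 * ρ := by
  have hsub : ∑ j ∈ F, ρ ^ j.natAbs ≤ ∑ j ∈ insert 0 F, ρ ^ j.natAbs :=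
    Finset.sum_le_sum_of_subset_of_nonneg (Finset.subset_insert _ _)
      (fun j _ _ => by positivity)
  set G := insert 0 F with hG
  have h0 : (0:ℤ) ∈ G := Finset.mem_insert_self _ _
  rw [← Finset.add_sum_erase G _ h0] at hsub
  simp only [Int.natAbs_zero, pow_zero] at hsub
  set E := G.erase 0 with hE
  have hE0 : (0:ℤ) ∉ E := Finset.notMem_erase _ _
  -- split into positive and negative parts
  have hsplit : ∑ j ∈ E, ρ ^ j.natAbs =
      ∑ j ∈ E.filter (fun j => 0 < j), ρ ^ j.natAbs +
      ∑ j ∈ E.filter (fun j => ¬ 0 < j), ρ ^ j.natAbs :=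
    (Finset.sum_filter_add_sum_filter_not _ _ _).symm
  set N := E.sup Int.natAbs with hN
  have hside : ∀ (s : Finset ℤ), s ⊆ E → (∀ x ∈ s, ∀ y ∈ s, x.natAbs = y.natAbs → x = y) →
      ∑ j ∈ s, ρ ^ j.natAbs ≤ 2 * ρ := by
    intro s hsE hinj
    rw [← Finset.sum_image hinj]
    have him : s.image Int.natAbs ⊆ Finset.Icc 1 N := by
      intro m hm
      simp only [Finset.mem_image] at hm
      obtain ⟨j, hj, rfl⟩ := hm
      have hj0 : j ≠ 0 := fun h => hE0 (h ▸ hsE hj)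
      refine Finset.mem_Icc.mpr ⟨by omega, Finset.le_sup (hsE hj)⟩
    calc ∑ m ∈ s.image Int.natAbs, ρ ^ m ≤ ∑ m ∈ Finset.Icc 1 N, ρ ^ m :=
          Finset.sum_le_sum_of_subset_of_nonneg him (fun _ _ _ => by positivity)
      _ ≤ 2 * ρ := geo_aux hρ hρ2 N
  have hpos := hside (E.filter (fun j => 0 < j)) (Finset.filter_subset _ _)
    (by intro x hx y hy h; simp only [Finset.mem_filter] at hx hy; omega)
  have hneg := hside (E.filter (fun j => ¬ 0 < j)) (Finset.filter_subset _ _)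
    (by
      intro x hx y hy h
      simp only [Finset.mem_filter] at hx hy
      have hx0 : x ≠ 0 := fun hc => hE0 (hc ▸ hx.1)
      have hy0 : y ≠ 0 := fun hc => hE0 (hc ▸ hy.1)
      omega)
  linarith

lemma theta_aux {ρ : ℝ} (hρ : 0 < ρ) (hρ2 : ρ ≤ 1/2) (t : ℝ) (F : Finset ℤ) :
    ∑ k ∈ F, Real.exp (-(4 * Real.log (1/ρ)) * ((k:ℝ) - t)^2) ≤ 1 + 4 * ρ := by
  have hρ1 : ρ < 1 := lt_of_le_of_lt hρ2 (by norm_num)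
  set k₀ : ℤ := round t with hk₀
  have hterm : ∀ k ∈ F, Real.exp (-(4 * Real.log (1/ρ)) * ((k:ℝ) - t)^2)
      ≤ ρ ^ (k - k₀).natAbs := by
    intro k _
    rcases eq_or_ne k k₀ with rfl | hk
    · simp only [sub_self, Int.natAbs_zero, pow_zero]
      apply Real.exp_le_one_iff.mpr
      have hlog : 0 ≤ Real.log (1/ρ) := Real.log_nonneg (by rw [le_div_iff₀ hρ]; linarith)
      nlinarith [sq_nonneg ((k₀:ℝ) - t)]
    · set a : ℝ := ((k - k₀).natAbs : ℝ) with ha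
      have ha1 : 1 ≤ a := by
        have : 1 ≤ (k - k₀).natAbs := by omega
        rw [ha]; exact_mod_cast this
    -- |k - t| ≥ a - 1/2 ≥ a/2
      have habs : a / 2 ≤ |(k:ℝ) - t| := by
        have h1 : |t - (k₀:ℝ)| ≤ 1/2 := abs_sub_round t
        have h2 : a = |((k:ℝ) - k₀)| := by
          rw [ha, ← Int.cast_sub]
          simp [Nat.cast_natAbs, Int.cast_abs]
        have h3 : |((k:ℝ) - k₀)| ≤ |(k:ℝ) - t| + |t - (k₀:ℝ)| := by
          calc |((k:ℝ) - k₀)| = |((k:ℝ) - t) + (t - k₀)| := by ring_nf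
            _ ≤ _ := abs_add_le _ _
        linarith
      have hsq : a^2 / 4 ≤ ((k:ℝ) - t)^2 := by
        have := sq_abs ((k:ℝ) - t)
        nlinarith [abs_nonneg ((k:ℝ) - t)]
      have hlog : 0 ≤ Real.log (1/ρ) := Real.log_nonneg (by rw [le_div_iff₀ hρ]; linarith)
      calc Real.exp (-(4 * Real.log (1/ρ)) * ((k:ℝ) - t)^2)
          ≤ Real.exp (Real.log ρ * (a^2)) := by
            apply Real.exp_le_exp.mpr
            have : Real.log (1/ρ) = - Real.log ρ := by
              rw [one_div, Real.log_inv]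
            rw [this]
            nlinarith
        _ = ρ ^ (a^2 : ℝ) := (Real.rpow_def_of_pos hρ _).symm
        _ ≤ ρ ^ (a : ℝ) := Real.rpow_le_rpow_of_exponent_ge hρ (le_of_lt hρ1) (by nlinarith)
        _ = ρ ^ (k - k₀).natAbs := Real.rpow_natCast ρ _
  calc ∑ k ∈ F, Real.exp (-(4 * Real.log (1/ρ)) * ((k:ℝ) - t)^2)
      ≤ ∑ k ∈ F, ρ ^ (k - k₀).natAbs := Finset.sum_le_sum hterm
    _ = ∑ j ∈ F.image (fun k => k - k₀), ρ ^ j.natAbs := by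
        rw [Finset.sum_image (by intro x _ y _ h; have h' : x - k₀ = y - k₀ := h; omega)]
    _ ≤ 1 + 4 * ρ := absSum_aux hρ hρ2 _

theorem stmt4 :
    ∃ C : ℝ, 0 < C ∧
      ∀ (ρ : ℝ) (n : ℕ) (y : EuclideanSpace ℝ (Fin n)), 0 < ρ → ρ ≤ 1 / 2 → 1 ≤ n →
        (({x : EuclideanSpace ℝ (Fin n) |
            (∀ i, ∃ k : ℤ, x i = k) ∧ ‖x - y‖ ≤ Real.sqrt (ρ * n)}).ncard : ℝ) ≤
          Real.exp (C * n * ρ * Real.log (1 / ρ)) := by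
  classical
  refine ⟨12, by norm_num, ?_⟩
  intro ρ n y hρ hρ2 hn
  have hρ1 : ρ < 1 := lt_of_le_of_lt hρ2 (by norm_num)
  have hρn : (0:ℝ) ≤ ρ * n := by positivity
  have hL : Real.log 2 ≤ Real.log (1/ρ) := by
    apply Real.log_le_log (by norm_num)
    rw [le_div_iff₀ hρ]; linarith
  have hL2 : (0.69:ℝ) < Real.log 2 := by
    have := Real.log_two_gt_d9; linarith
  set L := Real.log (1/ρ) with hLdef
  have hLpos : 0 < L := by linarith
  set s : ℝ := 4 * L with hs
  set r := Real.sqrt (ρ * n) with hr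
  set k₀ : Fin n → ℤ := fun i => round (y i) with hk₀
  set M : ℤ := ⌈r⌉ + 1 with hM
  set B : Fin n → Finset ℤ := fun i => Finset.Icc (k₀ i - M) (k₀ i + M) with hB
  set P : Finset (Fin n → ℤ) := (Fintype.piFinset B).filter
      (fun v => ∑ i, ((v i : ℝ) - y i)^2 ≤ ρ * n) with hP
  -- Step 1 : injection into P
  have hcard : (({x : EuclideanSpace ℝ (Fin n) |
      (∀ i, ∃ k : ℤ, x i = k) ∧ ‖x - y‖ ≤ r}).ncard : ℝ) ≤ (P.card : ℝ) := by
    have h : ({x : EuclideanSpace ℝ (Fin n) |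
        (∀ i, ∃ k : ℤ, x i = k) ∧ ‖x - y‖ ≤ r}).ncard ≤ (↑P : Set (Fin n → ℤ)).ncard := by
      have key : ∀ x : EuclideanSpace ℝ (Fin n), (∀ i, ∃ k : ℤ, x i = k) → ‖x - y‖ ≤ r →
          (∀ i, ((round (x i) : ℝ)) = x i) ∧ (fun i => round (x i)) ∈ P := by
        intro x hint hxnorm
        have hxi : ∀ i, ((round (x i) : ℝ)) = x i := by
          intro i
          obtain ⟨k, hk⟩ := hint i
          rw [hk]; norm_cast; exact round_intCast k
        have hsum : ∑ i, (x i - y i)^2 ≤ ρ * n := by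
          have h1 : ‖x - y‖^2 ≤ ρ * n := by
            have h2 := pow_le_pow_left₀ (norm_nonneg (x - y)) hxnorm 2
            rwa [hr, Real.sq_sqrt hρn] at h2
          have h2 : ‖x - y‖^2 = ∑ i, (x i - y i)^2 := by
            rw [EuclideanSpace.norm_eq, Real.sq_sqrt (by positivity)]
            apply Finset.sum_congr rfl
            intro i _
            simp [Real.norm_eq_abs, sq_abs]
          linarith
        have hcoord : ∀ i, |x i - y i| ≤ r := by
          intro i
          have h3 : (x i - y i)^2 ≤ ρ * n :=
            le_trans (Finset.single_le_sum (f := fun i => (x i - y i)^2)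
              (fun i _ => sq_nonneg _) (Finset.mem_univ i)) hsum
          rw [← Real.sqrt_sq_eq_abs, hr]
          exact Real.sqrt_le_sqrt h3
        refine ⟨hxi, ?_⟩
        rw [hP, Finset.mem_filter]
        constructor
        · rw [Fintype.mem_piFinset]
          intro i
          have habs : |(round (x i) : ℝ) - (k₀ i : ℝ)| ≤ (M : ℝ) := by
            rw [hxi i]
            calc |x i - (k₀ i : ℝ)| ≤ |x i - y i| + |y i - (k₀ i : ℝ)| := abs_sub_le _ _ _
              _ ≤ r + 1/2 := add_le_add (hcoord i) (abs_sub_round (y i))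
              _ ≤ (M : ℝ) := by
                  rw [hM]; push_cast
                  have := Int.le_ceil r; linarith
          have habs' : |round (x i) - k₀ i| ≤ M := by
            have h5 : ((|round (x i) - k₀ i| : ℤ) : ℝ) ≤ (M : ℝ) := by
              push_cast
              exact habs
            exact_mod_cast h5
          rw [hB]
          simp only [Finset.mem_Icc]
          have := abs_le.mp habs'
          omega
        · simp only [hxi]
          exact hsum
      apply Set.ncard_le_ncard_of_injOn (fun x i => round (x i))
      · intro x hx
        obtain ⟨hint, hxnorm⟩ := hx
        exact (key x hint hxnorm).2
      · intro x hx x' hx' hfe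
        have h1 := (key x hx.1 hx.2).1
        have h2 := (key x' hx'.1 hx'.2).1
        apply PiLp.ext; intro i
        rw [← h1 i, ← h2 i]
        exact congrArg _ (congrFun hfe i)
    rw [Set.ncard_coe_finset] at h
    exact_mod_cast h
  -- Step 2 : weight function bound
  set w : (Fin n → ℤ) → ℝ := fun v => ∏ i, Real.exp (-s * ((v i : ℝ) - y i)^2) with hw
  have hw1 : ∀ v ∈ P, Real.exp (-(s * (ρ * n))) ≤ w v := by
    intro v hv
    rw [hP, Finset.mem_filter] at hv
    have hvsum := hv.2
    have hwv : w v = Real.exp (∑ i, -s * ((v i : ℝ) - y i)^2) := (Real.exp_sum _ _).symm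
    rw [hwv]
    apply Real.exp_le_exp.mpr
    have he : ∑ i, -s * ((v i : ℝ) - y i)^2 = -s * ∑ i, ((v i : ℝ) - y i)^2 := by
      rw [Finset.mul_sum]
    rw [he]
    nlinarith [hLpos]
  have hstep1 : (P.card : ℝ) * Real.exp (-(s * (ρ * n))) ≤ ∑ v ∈ P, w v := by
    have := Finset.card_nsmul_le_sum P w _ hw1
    simpa [nsmul_eq_mul] using this
  have hstep2 : ∑ v ∈ P, w v ≤ ∑ v ∈ Fintype.piFinset B, w v := by
    apply Finset.sum_le_sum_of_subset_of_nonneg (Finset.filter_subset _ _)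
    intro v _ _
    rw [hw]
    positivity
  have hstep3 : ∑ v ∈ Fintype.piFinset B, w v
      = ∏ i, ∑ k ∈ B i, Real.exp (-s * ((k : ℝ) - y i)^2) :=
    (Finset.prod_univ_sum B (fun i k => Real.exp (-s * ((k : ℝ) - y i)^2))).symm
  have hstep4 : ∏ i, (∑ k ∈ B i, Real.exp (-s * ((k : ℝ) - y i)^2)) ≤ (1 + 4*ρ)^n := by
    calc ∏ i, (∑ k ∈ B i, Real.exp (-s * ((k : ℝ) - y i)^2))
        ≤ ∏ _i : Fin n, (1 + 4*ρ) := by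
          apply Finset.prod_le_prod
          · intro i _
            apply Finset.sum_nonneg
            intro k _
            positivity
          · intro i _
            have := theta_aux hρ hρ2 (y i) (B i)
            rw [hLdef] at hs
            rw [hs]
            exact this
      _ = (1 + 4*ρ)^n := by
          rw [Finset.prod_const, Finset.card_univ, Fintype.card_fin]
  have hchain : (P.card : ℝ) * Real.exp (-(s * (ρ * n))) ≤ (1 + 4*ρ)^n := by
    calc (P.card : ℝ) * Real.exp (-(s * (ρ * n))) ≤ ∑ v ∈ P, w v := hstep1
      _ ≤ ∑ v ∈ Fintype.piFinset B, w v := hstep2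
      _ = _ := hstep3
      _ ≤ (1 + 4*ρ)^n := hstep4
  have hPbound : (P.card : ℝ) ≤ Real.exp (s * (ρ * n)) * (1 + 4*ρ)^n := by
    have h1 : (P.card : ℝ) = Real.exp (s * (ρ * n)) *
        ((P.card : ℝ) * Real.exp (-(s * (ρ * n)))) := by
      rw [← mul_assoc, mul_comm (Real.exp _) _, mul_assoc, ← Real.exp_add]
      simp
    rw [h1]
    exact mul_le_mul_of_nonneg_left hchain (Real.exp_pos _).le
  -- Step 3 : numeric conclusion
  have hfinal : Real.exp (s * (ρ * n)) * (1 + 4*ρ)^n ≤ Real.exp (12 * n * ρ * L) := by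
    have h1 : (1 + 4*ρ)^n ≤ Real.exp (4*ρ) ^ n := by
      apply pow_le_pow_left₀ (by linarith)
      have := Real.add_one_le_exp (4*ρ)
      linarith
    have h2 : Real.exp (4*ρ) ^ n = Real.exp ((n:ℝ) * (4*ρ)) := (Real.exp_nat_mul _ n).symm
    calc Real.exp (s * (ρ * n)) * (1 + 4*ρ)^n
        ≤ Real.exp (s * (ρ * n)) * Real.exp ((n:ℝ) * (4*ρ)) := by
          rw [← h2]
          exact mul_le_mul_of_nonneg_left h1 (Real.exp_pos _).le
      _ = Real.exp (s * (ρ * n) + (n:ℝ) * (4*ρ)) := (Real.exp_add _ _).symm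
      _ ≤ Real.exp (12 * n * ρ * L) := by
          apply Real.exp_le_exp.mpr
          have hn1 : (1:ℝ) ≤ (n:ℝ) := by exact_mod_cast hn
          rw [hs]
          nlinarith [mul_pos hρ (lt_of_lt_of_le zero_lt_one hn1)]
  calc (({x : EuclideanSpace ℝ (Fin n) |
      (∀ i, ∃ k : ℤ, x i = k) ∧ ‖x - y‖ ≤ r}).ncard : ℝ)
      ≤ (P.card : ℝ) := hcard
    _ ≤ Real.exp (s * (ρ * n)) * (1 + 4*ρ)^n := hPbound
    _ ≤ Real.exp (12 * n * ρ * L) := hfinal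
end

section
/- Let r ≥ 1 and β ∈ (0,1]. Every r×r real symmetric matrix whose diagonal entries are all 1 and whose off-diagonal entries all lie in the interval [1−β, 1−β+β/(2r)] is positive semidefinite and has determinant at least (β/2)^{r−1}·(β/2 + (1−β)·r). -/
open Finset in
lemma aux_prod_ge {ι : Type*} (c : ℝ) (hc : 0 ≤ c) (f : ι → ℝ) (s : Finset ι)
    (hs : s.Nonempty) (hf : ∀ i ∈ s, c ≤ f i) :
    c ^ (s.card - 1) * (c + ∑ i ∈ s, (f i - c)) ≤ ∏ i ∈ s, f i := by
  induction hs using Finset.Nonempty.cons_induction with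
  | singleton a => simp
  | cons a s ha hs ih =>
    have hfa : c ≤ f a := hf a (Finset.mem_cons_self a s)
    have hf' : ∀ i ∈ s, c ≤ f i := fun i hi => hf i (Finset.mem_cons.2 (Or.inr hi))
    have ih' := ih hf'
    have hS : 0 ≤ ∑ i ∈ s, (f i - c) :=
      Finset.sum_nonneg fun i hi => sub_nonneg.2 (hf' i hi)
    have hcard : (Finset.cons a s ha).card - 1 = s.card := by
      rw [Finset.card_cons]; omega
    have hcard2 : s.card - 1 + 1 = s.card := Nat.succ_pred_eq_of_pos (Finset.card_pos.2 hs)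
    rw [Finset.prod_cons, Finset.sum_cons, hcard]
    have hpow : (0:ℝ) ≤ c ^ (s.card - 1) := pow_nonneg hc _
    calc c ^ s.card * (c + (f a - c + ∑ i ∈ s, (f i - c)))
        = c ^ (s.card - 1) * (c * (f a + ∑ i ∈ s, (f i - c))) := by
          have h : c ^ s.card = c ^ (s.card - 1) * c := by conv_lhs => rw [← hcard2, pow_succ]
          rw [h]; ring
      _ ≤ c ^ (s.card - 1) * (f a * (c + ∑ i ∈ s, (f i - c))) := by
          apply mul_le_mul_of_nonneg_left _ hpow
          nlinarith [mul_le_mul_of_nonneg_right hfa hS]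
      _ = f a * (c ^ (s.card - 1) * (c + ∑ i ∈ s, (f i - c))) := by ring
      _ ≤ f a * ∏ i ∈ s, f i := mul_le_mul_of_nonneg_left ih' (hc.trans hfa)

open Matrix in
theorem stmt5 (r : ℕ) (hr : 1 ≤ r) (β : ℝ) (hβ0 : 0 < β) (hβ1 : β ≤ 1)
    (M : Matrix (Fin r) (Fin r) ℝ) (hsymm : M.IsSymm)
    (hdiag : ∀ i, M i i = 1)
    (hoff : ∀ i j, i ≠ j → M i j ∈ Set.Icc (1 - β) (1 - β + β / (2 * r))) :
    M.PosSemidef ∧ (β / 2) ^ (r - 1) * (β / 2 + (1 - β) * r) ≤ M.det := by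
  have hrR : (0:ℝ) < r := by exact_mod_cast hr
  have hM : M.IsHermitian := by
    rw [Matrix.IsHermitian, Matrix.conjTranspose_eq_transpose_of_trivial]
    exact hsymm
  -- key quadratic form lower bound
  have key : ∀ x : Fin r → ℝ, β / 2 * ∑ i, x i ^ 2 ≤ x ⬝ᵥ (M *ᵥ x) := by
    intro x
    have expand : x ⬝ᵥ (M *ᵥ x) = ∑ i, ∑ j, x i * (M i j * x j) := by
      simp [dotProduct, Matrix.mulVec, Finset.mul_sum]
    have hterm : ∀ i j : Fin r, (1 - β) * (x i * x j)
        + (if i = j then β * x i ^ 2 else 0) - β / (2 * r) * (|x i| * |x j|)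
        ≤ x i * (M i j * x j) := by
      intro i j
      rcases eq_or_ne i j with rfl | hij
      · have h1 : |x i| * |x i| = x i ^ 2 := by rw [← abs_mul, ← sq, abs_sq]
        rw [if_pos rfl, hdiag i, h1]
        nlinarith [mul_nonneg (by positivity : (0:ℝ) ≤ β / (2 * r)) (sq_nonneg (x i))]
      · obtain ⟨hlo, hhi⟩ := hoff i j hij
        rw [if_neg hij]
        have habs : |(M i j - (1 - β)) * (x i * x j)| ≤ β / (2 * r) * (|x i| * |x j|) := by
          rw [abs_mul, abs_mul]
          apply mul_le_mul _ le_rfl (by positivity) (by positivity)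
          rw [abs_le]
          constructor <;> [nlinarith [div_nonneg (le_of_lt hβ0) (by positivity : (0:ℝ) ≤ 2 * r)]; linarith]
        nlinarith [neg_abs_le ((M i j - (1 - β)) * (x i * x j))]
    have hsum : ∑ i, ∑ j, ((1 - β) * (x i * x j)
        + (if i = j then β * x i ^ 2 else 0) - β / (2 * r) * (|x i| * |x j|))
        ≤ x ⬝ᵥ (M *ᵥ x) := by
      rw [expand]
      exact Finset.sum_le_sum fun i _ => Finset.sum_le_sum fun j _ => hterm i j
    have hS : ∑ i, ∑ j, ((1 - β) * (x i * x j)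
        + (if i = j then β * x i ^ 2 else 0) - β / (2 * r) * (|x i| * |x j|))
        = (1 - β) * (∑ i, x i) ^ 2 + β * ∑ i, x i ^ 2
          - β / (2 * r) * (∑ i, |x i|) ^ 2 := by
      have hsq : ∀ g : Fin r → ℝ, (∑ i, g i) ^ 2 = ∑ i, ∑ j, g i * g j := by
        intro g; rw [sq, Finset.sum_mul_sum]
      simp only [hsq, Finset.mul_sum, Finset.sum_sub_distrib, Finset.sum_add_distrib,
        Finset.sum_ite_eq, Finset.mem_univ, if_true]
    have hCS : (∑ i, |x i|) ^ 2 ≤ r * ∑ i, x i ^ 2 := by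
      have := sq_sum_le_card_mul_sum_sq (s := Finset.univ) (f := fun i : Fin r => |x i|)
      simpa [sq_abs] using this
    have hQ : (0:ℝ) ≤ ∑ i, x i ^ 2 := Finset.sum_nonneg fun i _ => sq_nonneg _
    have h1 : β / (2 * r) * (∑ i, |x i|) ^ 2 ≤ β / 2 * ∑ i, x i ^ 2 := by
      calc β / (2 * r) * (∑ i, |x i|) ^ 2 ≤ β / (2 * r) * (r * ∑ i, x i ^ 2) :=
            mul_le_mul_of_nonneg_left hCS (by positivity)
        _ = β / 2 * ∑ i, x i ^ 2 := by field_simp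
    nlinarith [sq_nonneg (∑ i, x i), mul_nonneg (sub_nonneg.2 hβ1) (sq_nonneg (∑ i, x i))]
  have hpsd : M.PosSemidef := by
    refine Matrix.posSemidef_iff_dotProduct_mulVec.2 ⟨hM, fun x => ?_⟩
    have h1 := key x
    have h2 : (0:ℝ) ≤ β / 2 * ∑ i, x i ^ 2 := by positivity
    simpa [Matrix.PosSemidef, star_trivial] using h2.trans h1
  have hev : ∀ i, β / 2 ≤ hM.eigenvalues i := by
    intro i
    set v : Fin r → ℝ := ⇑(hM.eigenvectorBasis i) with hv
    have hmv : M *ᵥ v = hM.eigenvalues i • v := hM.mulVec_eigenvectorBasis i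
    have hnorm : ∑ k, v k * v k = 1 := by
      have h1 : ‖hM.eigenvectorBasis i‖ = 1 := hM.eigenvectorBasis.orthonormal.1 i
      have h2 : (inner ℝ (hM.eigenvectorBasis i) (hM.eigenvectorBasis i) : ℝ) = 1 := by
        rw [real_inner_self_eq_norm_sq, h1]; norm_num
      simp only [PiLp.inner_apply, RCLike.inner_apply, conj_trivial] at h2; exact h2
    have h3 := key v
    rw [hmv] at h3
    have h4 : v ⬝ᵥ (hM.eigenvalues i • v) = hM.eigenvalues i * ∑ k, v k * v k := by
      simp only [dotProduct, Pi.smul_apply, smul_eq_mul, Finset.mul_sum]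
      exact Finset.sum_congr rfl fun k _ => by ring
    have h5 : ∑ k, v k ^ 2 = 1 := by simpa [sq] using hnorm
    rw [h4, hnorm, h5, mul_one, mul_one] at h3
    exact h3
  have htr : ∑ i, hM.eigenvalues i = (r : ℝ) := by
    have h1 : M.trace = ∑ i, hM.eigenvalues i := by
      conv_lhs => rw [hM.spectral_theorem]
      rw [Unitary.conjStarAlgAut_apply, Matrix.trace_mul_cycle,
        Matrix.mem_unitaryGroup_iff'.mp (hM.eigenvectorUnitary).2, one_mul]
      simp [Matrix.trace, Matrix.diag]
    have h2 : M.trace = (r : ℝ) := by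
      simp [Matrix.trace, Matrix.diag, hdiag]
    rw [← h1, h2]
  have hdet : M.det = ∏ i, hM.eigenvalues i := by
    simpa using hM.det_eq_prod_eigenvalues
  have hne : (Finset.univ : Finset (Fin r)).Nonempty := ⟨⟨0, hr⟩, Finset.mem_univ _⟩
  have hprod := aux_prod_ge (β / 2) (by positivity) hM.eigenvalues Finset.univ hne
    (fun i _ => hev i)
  rw [Finset.card_univ, Fintype.card_fin, Finset.sum_sub_distrib, htr,
    Finset.sum_const, Finset.card_univ, Fintype.card_fin, nsmul_eq_mul] at hprod
  refine ⟨hpsd, ?_⟩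
  rw [hdet]
  refine le_trans ?_ hprod
  apply mul_le_mul_of_nonneg_left _ (by positivity)
  nlinarith [mul_nonneg (le_of_lt hβ0) (le_of_lt hrR)]
end

section
/- Let t ∈ (0,1] and let x₀ be a unit vector in R^n. Every nonzero vector x ∈ R^n whose angle with x₀ is at most arctan(t) lies in the union over all integers i of the closed balls of radius √5·t·(1+t)^i centered at (1+t)^i·x₀. -/
set_option maxHeartbeats 1000000

theorem stmt6 (n : ℕ) (t : ℝ) (ht0 : 0 < t) (ht1 : t ≤ 1)
    (x₀ x : EuclideanSpace ℝ (Fin n)) (hx₀ : ‖x₀‖ = 1) (hx : x ≠ 0)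
    (hangle : InnerProductGeometry.angle x x₀ ≤ Real.arctan t) :
    ∃ i : ℤ, ‖x - (1 + t) ^ i • x₀‖ ≤ Real.sqrt 5 * t * (1 + t) ^ i := by
  set θ := InnerProductGeometry.angle x x₀ with hθ
  set r : ℝ := (inner ℝ x x₀ : ℝ) with hrdef
  clear_value θ r
  have hxpos : 0 < ‖x‖ := norm_pos_iff.mpr hx
  have hθ0 : 0 ≤ θ := hθ ▸ InnerProductGeometry.angle_nonneg x x₀
  have hθlt : θ < Real.pi / 2 := lt_of_le_of_lt hangle (Real.arctan_lt_pi_div_two t)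
  have hcos : Real.cos θ = r / ‖x‖ := by
    rw [hθ, hrdef, InnerProductGeometry.cos_angle, hx₀, mul_one]
  have hcospos : 0 < Real.cos θ :=
    Real.cos_pos_of_mem_Ioo ⟨by linarith [Real.pi_pos], hθlt⟩
  have hr : 0 < r := by
    have h := mul_pos hcospos hxpos
    rw [hcos, div_mul_cancel₀ _ (ne_of_gt hxpos)] at h
    exact h
  -- tan θ ≤ t
  have htan : Real.tan θ ≤ t := by
    have := Real.strictMonoOn_tan.monotoneOn
      (Set.mem_Ioo.mpr ⟨by linarith [Real.pi_pos], hθlt⟩)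
      (Set.mem_Ioo.mpr ⟨by linarith [Real.pi_pos, Real.neg_pi_div_two_lt_arctan t],
        Real.arctan_lt_pi_div_two t⟩) hangle
    rwa [Real.tan_arctan] at this
  -- sin θ ≤ t cos θ
  have hsin : Real.sin θ ≤ t * Real.cos θ := by
    have h := htan
    rw [Real.tan_eq_sin_div_cos, div_le_iff₀ hcospos] at h
    linarith [h]
  have hsin0 : 0 ≤ Real.sin θ := Real.sin_nonneg_of_nonneg_of_le_pi hθ0 (by linarith [Real.pi_pos, hθlt])
  -- ‖x - r x₀‖² = ‖x‖² - r² ≤ t² r²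
  have hnorm1 : ‖x - r • x₀‖ ^ 2 = ‖x‖ ^ 2 - r ^ 2 := by
    rw [norm_sub_sq_real, real_inner_smul_right, norm_smul, hx₀]
    simp [hrdef.symm, abs_of_pos hr]
    ring
  have hxr : r = ‖x‖ * Real.cos θ := by rw [hcos]; field_simp
  have hsin2 : Real.sin θ ^ 2 = 1 - Real.cos θ ^ 2 := by
    have := Real.sin_sq_add_cos_sq θ; linarith
  have hkey : ‖x - r • x₀‖ ^ 2 ≤ t ^ 2 * r ^ 2 := by
    rw [hnorm1, hxr]
    have h1 : Real.sin θ ^ 2 ≤ t ^ 2 * Real.cos θ ^ 2 := by nlinarith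
    nlinarith [sq_nonneg ‖x‖, hxpos]
  obtain ⟨i, hi1, hi2⟩ := exists_mem_Ico_zpow hr (by linarith : (1:ℝ) < 1 + t)
  refine ⟨i, ?_⟩
  set s : ℝ := (1 + t) ^ i with hs
  have hspos : 0 < s := zpow_pos (by linarith) i
  have hi1' : s ≤ r := hi1
  have hi2'' : r < s * (1 + t) := by
    calc r < (1 + t) ^ (i + 1) := hi2
    _ = s * (1 + t) := by rw [hs, zpow_add_one₀ (by linarith : (1:ℝ)+t ≠ 0)]
  clear_value s
  clear hi1 hi2 hs
  have hnorm2 : ‖x - s • x₀‖ ^ 2 = ‖x - r • x₀‖ ^ 2 + (r - s) ^ 2 := by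
    rw [norm_sub_sq_real, norm_sub_sq_real, real_inner_smul_right, real_inner_smul_right,
      norm_smul, norm_smul, hx₀]
    simp [hrdef.symm, abs_of_pos hr, abs_of_pos hspos]
    ring
  have hsq : ‖x - s • x₀‖ ^ 2 ≤ 5 * t ^ 2 * s ^ 2 := by
    rw [hnorm2]
    have hA : (r - s) ^ 2 ≤ s ^ 2 * t ^ 2 := by nlinarith [hi1', hi2'', hspos, ht0]
    have hB : t ^ 2 * r ^ 2 ≤ t ^ 2 * (s * (1 + t)) ^ 2 := by
      have : r ^ 2 ≤ (s * (1 + t)) ^ 2 := by nlinarith [hr, hi2'']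
      nlinarith [sq_nonneg t, this]
    have hC : t ^ 2 * (s * (1 + t)) ^ 2 + s ^ 2 * t ^ 2 ≤ 5 * t ^ 2 * s ^ 2 := by
      have h4 : (1 + t) ^ 2 ≤ 4 := by nlinarith
      nlinarith [mul_nonneg (sq_nonneg t) (sq_nonneg s), h4]
    linarith [hkey, hA, hB, hC]
  have hrhs : (Real.sqrt 5 * t * s) ^ 2 = 5 * t ^ 2 * s ^ 2 := by
    rw [mul_pow, mul_pow, Real.sq_sqrt (by norm_num : (5:ℝ) ≥ 0)]
  have hrhs0 : 0 ≤ Real.sqrt 5 * t * s := by positivity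
  nlinarith [norm_nonneg (x - s • x₀), hsq, hrhs, hrhs0, sq_nonneg (‖x - s • x₀‖ - Real.sqrt 5 * t * s)]
end

section
/- Let B ≥ 1, K ≥ 2, and set L = B/√(4K·ln⁺B) where ln⁺B = max(ln B, 1). If N ~ N(0,1), then the random variable {L·N}_B² has expectation at most 1/4 + C·B^{2−K} for a universal constant C, where {u}_B = u − ⌈u⌋_B with ⌈u⌋_B the B-truncated nearest-integer rounding. -/
open MeasureTheory ProbabilityTheory
open scoped NNReal ENNReal

/-- `B`-truncated rounding to the nearest integer. -/
noncomputable def roundB (B u : ℝ) : ℝ := if |u| ≤ B then (round u : ℝ) else B * Real.sign u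

/-- Rounding remainder. -/
noncomputable def fracB (B u : ℝ) : ℝ := u - roundB B u

lemma integral_gaussianReal_eq (g : ℝ → ℝ) :
    ∫ x, g x ∂(gaussianReal 0 1) = ∫ x, gaussianPDFReal 0 1 x * g x := by
  rw [gaussianReal_of_var_ne_zero 0 one_ne_zero, gaussianPDF_def]
  rw [show (fun x => ENNReal.ofReal (gaussianPDFReal 0 1 x))
      = (fun x => ((Real.toNNReal (gaussianPDFReal 0 1 x) : ℝ≥0) : ℝ≥0∞)) from rfl]
  rw [integral_withDensity_eq_integral_smul ((measurable_gaussianPDFReal 0 1).real_toNNReal)]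
  congr 1
  ext x
  simp [NNReal.smul_def, Real.coe_toNNReal _ (gaussianPDFReal_nonneg 0 1 x)]

lemma pdf_mul_exp (x : ℝ) :
    gaussianPDFReal 0 1 x * Real.exp (x ^ 2 / 4)
      = (Real.sqrt (2 * Real.pi))⁻¹ * Real.exp (-(4 : ℝ)⁻¹ * x ^ 2) := by
  simp only [gaussianPDFReal, NNReal.coe_one, mul_one, sub_zero]
  rw [mul_assoc, ← Real.exp_add]
  ring_nf

lemma integrable_expq : Integrable (fun x => Real.exp (x ^ 2 / 4)) (gaussianReal 0 1) := by
  rw [gaussianReal_of_var_ne_zero 0 one_ne_zero, gaussianPDF_def]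
  rw [integrable_withDensity_iff_integrable_smul'
      ((measurable_gaussianPDFReal 0 1).ennreal_ofReal)
      (Filter.Eventually.of_forall fun x => ENNReal.ofReal_lt_top)]
  have h : (fun x => (ENNReal.ofReal (gaussianPDFReal 0 1 x)).toReal • Real.exp (x ^ 2 / 4))
      = fun x => (Real.sqrt (2 * Real.pi))⁻¹ * Real.exp (-(4 : ℝ)⁻¹ * x ^ 2) := by
    ext x
    rw [ENNReal.toReal_ofReal (gaussianPDFReal_nonneg 0 1 x), smul_eq_mul, pdf_mul_exp]
  rw [h]
  exact (integrable_exp_neg_mul_sq (by norm_num)).const_mul _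

lemma integral_expq_le : ∫ x, Real.exp (x ^ 2 / 4) ∂(gaussianReal 0 1) ≤ 2 := by
  rw [integral_gaussianReal_eq]
  have h : (fun x => gaussianPDFReal 0 1 x * Real.exp (x ^ 2 / 4))
      = fun x => (Real.sqrt (2 * Real.pi))⁻¹ * Real.exp (-(4 : ℝ)⁻¹ * x ^ 2) := by
    ext x; exact pdf_mul_exp x
  rw [h, integral_const_mul, integral_gaussian]
  have hpi : (0 : ℝ) < Real.pi := Real.pi_pos
  have h4 : Real.sqrt (Real.pi / (4 : ℝ)⁻¹) = Real.sqrt 2 * Real.sqrt (2 * Real.pi) := by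
    rw [← Real.sqrt_mul (by norm_num)]
    congr 1
    field_simp
    ring
  rw [h4]
  have hs : (0 : ℝ) < Real.sqrt (2 * Real.pi) := Real.sqrt_pos.mpr (by positivity)
  have heq : (Real.sqrt (2 * Real.pi))⁻¹ * Real.sqrt 2 * Real.sqrt (2 * Real.pi)
      = Real.sqrt 2 := by field_simp
  rw [← mul_assoc, heq]
  calc Real.sqrt 2 ≤ Real.sqrt 4 := Real.sqrt_le_sqrt (by norm_num)
    _ = 2 := by rw [show (4 : ℝ) = 2 ^ 2 by norm_num, Real.sqrt_sq (by norm_num)]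

theorem stmt12 :
    ∃ C : ℝ, 0 < C ∧
      ∀ (B K : ℝ), 1 ≤ B → 2 ≤ K →
        ∫ x, (fracB B ((B / Real.sqrt (4 * K * max (Real.log B) 1)) * x)) ^ 2
            ∂(gaussianReal 0 1) ≤
          1 / 4 + C * B ^ (2 - K) := by
  refine ⟨2, by norm_num, fun B K hB hK => ?_⟩
  have hB0 : (0 : ℝ) < B := lt_of_lt_of_le one_pos hB
  set m : ℝ := max (Real.log B) 1 with hm
  have hm1 : (1 : ℝ) ≤ m := le_max_right _ _
  have hlog : Real.log B ≤ m := le_max_left _ _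
  set t2 : ℝ := 4 * K * m with ht2def
  have ht2 : (8 : ℝ) ≤ t2 := by nlinarith
  have ht2pos : (0 : ℝ) < t2 := by linarith
  have hts : (0 : ℝ) < Real.sqrt t2 := Real.sqrt_pos.mpr ht2pos
  have htsq : Real.sqrt t2 ^ 2 = t2 := Real.sq_sqrt ht2pos.le
  set L : ℝ := B / Real.sqrt t2 with hL
  have hLpos : 0 < L := div_pos hB0 hts
  set a : ℝ := B ^ 2 * Real.exp (-t2 / 4) with ha
  have ha0 : 0 ≤ a := by positivity
  have key : ∀ x : ℝ, (fracB B (L * x)) ^ 2 ≤ 1 / 4 + a * Real.exp (x ^ 2 / 4) := by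
    intro x
    have hexp0 : 0 ≤ a * Real.exp (x ^ 2 / 4) := by positivity
    by_cases hc : |L * x| ≤ B
    · rw [fracB, roundB, if_pos hc]
      have h1 := abs_sub_round (L * x)
      have h2 := abs_le.mp h1
      nlinarith [h2.1, h2.2]
    · rw [fracB, roundB, if_neg hc]
      push_neg at hc
      have hxabs : Real.sqrt t2 < |x| := by
        have h1 : |L * x| = L * |x| := by
          rw [abs_mul, abs_of_pos hLpos]
        rw [h1, hL] at hc
        rw [div_mul_eq_mul_div, lt_div_iff₀ hts] at hc
        nlinarith
      have hx2 : t2 < x ^ 2 := by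
        calc t2 = Real.sqrt t2 ^ 2 := htsq.symm
          _ < |x| ^ 2 := by
              apply pow_lt_pow_left₀ hxabs hts.le
              norm_num
          _ = x ^ 2 := sq_abs x
      have step1 : (L * x - B * Real.sign (L * x)) ^ 2 ≤ (L * x) ^ 2 := by
        rcases lt_trichotomy (L * x) 0 with hneg | hzero | hpos
        · rw [Real.sign_of_neg hneg]
          have : B < -(L * x) := by
            have := abs_of_neg hneg; linarith [hc, this.symm.le]
          nlinarith
        · exfalso; rw [hzero] at hc; simp at hc; linarith
        · rw [Real.sign_of_pos hpos]
          have : B < L * x := by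
            have := abs_of_pos hpos; linarith [hc, this.symm.le]
          nlinarith
      have step2 : (L * x) ^ 2 ≤ a * Real.exp (x ^ 2 / 4) := by
        have hLx : (L * x) ^ 2 = B ^ 2 * (x ^ 2 / t2) := by
          rw [mul_pow, hL, div_pow, htsq]
          ring
        have hratio : x ^ 2 / t2 ≤ Real.exp ((x ^ 2 - t2) / 4) := by
          have hv : 0 ≤ x ^ 2 - t2 := by linarith
          have h1 : x ^ 2 / t2 = 1 + (x ^ 2 - t2) / t2 := by
            field_simp
            ring
          have h2 : (x ^ 2 - t2) / t2 ≤ (x ^ 2 - t2) / 4 := by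
            apply div_le_div_of_nonneg_left hv (by norm_num) <;> linarith
          have h3 := Real.add_one_le_exp ((x ^ 2 - t2) / 4)
          linarith
        have hsplit : Real.exp ((x ^ 2 - t2) / 4)
            = Real.exp (-t2 / 4) * Real.exp (x ^ 2 / 4) := by
          rw [← Real.exp_add]; congr 1; ring
        calc (L * x) ^ 2 = B ^ 2 * (x ^ 2 / t2) := hLx
          _ ≤ B ^ 2 * Real.exp ((x ^ 2 - t2) / 4) := by
              apply mul_le_mul_of_nonneg_left hratio (by positivity)
          _ = a * Real.exp (x ^ 2 / 4) := by rw [hsplit, ha]; ring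
      linarith
  have hint : Integrable (fun x => 1 / 4 + a * Real.exp (x ^ 2 / 4)) (gaussianReal 0 1) :=
    (integrable_const _).add (integrable_expq.const_mul a)
  have habound : a ≤ B ^ (2 - K) := by
    have h1 : Real.exp (-t2 / 4) ≤ Real.exp (-(K * Real.log B)) := by
      apply Real.exp_le_exp.mpr
      rw [ht2def]
      nlinarith
    have h2 : Real.exp (-(K * Real.log B)) = B ^ (-K) := by
      rw [Real.rpow_def_of_pos hB0]; congr 1; ring
    have h3 : B ^ (2 - K) = B ^ 2 * B ^ (-K) := by
      rw [show (2 - K : ℝ) = 2 + (-K) by ring, Real.rpow_add hB0, Real.rpow_two]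
    rw [h3, ha]
    have : Real.exp (-t2 / 4) ≤ B ^ (-K) := h2 ▸ h1
    nlinarith [sq_nonneg B]
  calc ∫ x, (fracB B (L * x)) ^ 2 ∂(gaussianReal 0 1)
      ≤ ∫ x, (1 / 4 + a * Real.exp (x ^ 2 / 4)) ∂(gaussianReal 0 1) := by
        apply integral_mono_of_nonneg (Filter.Eventually.of_forall fun x => sq_nonneg _) hint
          (Filter.Eventually.of_forall key)
    _ = 1 / 4 + a * ∫ x, Real.exp (x ^ 2 / 4) ∂(gaussianReal 0 1) := by
        rw [integral_add (integrable_const _) (integrable_expq.const_mul a),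
          integral_const, integral_const_mul]
        simp
    _ ≤ 1 / 4 + a * 2 := by
        have := integral_expq_le
        nlinarith [integral_nonneg (μ := gaussianReal 0 1) (f := fun x : ℝ => Real.exp (x ^ 2 / 4))
          (fun x : ℝ => (Real.exp_pos (x ^ 2 / 4)).le)]
    _ ≤ 1 / 4 + 2 * B ^ (2 - K) := by linarith
end

section
/- Suppose A₁, A₂, B₁, B₂, … are independent real random variables where each A_t satisfies Pr[A_t > m + s] ≤ exp(−c·(√m + s/√m)²) for all s ≥ 0 and each B_t has mean at least 1/4 and satisfies Pr[|B_t| ≥ s] ≤ C·exp(−c·s) for all s > 0 (with universal constants c, C). Then Σ_{t=0}^∞ Pr[A₁ − B₁ − ⋯ − B_t > 2m] ≤ C'·exp(−c'·m) for universal constants C', c' > 0. -/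
open MeasureTheory ProbabilityTheory

section aux
open Real Set

lemma aux_exp_le (x : ℝ) : Real.exp x ≤ 1 + x + x^2 * Real.exp |x| := by
  have hprod : Real.exp (-x) * Real.exp x = 1 := by rw [← Real.exp_add]; simp
  have h1 : (1 - x) * Real.exp x ≤ 1 := by
    have h := mul_le_mul_of_nonneg_right (Real.add_one_le_exp (-x)) (Real.exp_pos x).le
    rw [hprod] at h; linarith
  rcases le_or_gt 0 x with hx | hx
  · rw [abs_of_nonneg hx]
    nlinarith [Real.exp_pos x, mul_le_mul_of_nonneg_left h1 hx]
  · rw [abs_of_neg hx]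
    have h2 : Real.exp x ≤ 1 + x + x^2 := by nlinarith [Real.exp_pos x]
    have h3 : (1:ℝ) ≤ Real.exp (-x) := Real.one_le_exp (by linarith)
    nlinarith [sq_nonneg x]

lemma moment_bound {Ω : Type} [MeasurableSpace Ω] (μ : Measure Ω) [IsProbabilityMeasure μ]
    {c C lam : ℝ} (hc : 0 < c) (hC : 0 < C) (hlam : 0 < lam) (hlamc : lam ≤ c / 2)
    (D : Ω → ℝ) (hD : Measurable D)
    (htail : ∀ s : ℝ, 0 < s → (μ {ω | s ≤ |D ω|}).toReal ≤ C * Real.exp (-c * s)) :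
    Integrable (fun ω => (D ω) ^ 2 * Real.exp (lam * |D ω|)) μ ∧
      ∫ ω, (D ω) ^ 2 * Real.exp (lam * |D ω|) ∂μ ≤ 160 * C / c ^ 2 := by
  set g : ℝ → ℝ := fun t => 2 * t * Real.exp (lam * t) + lam * (t ^ 2 * Real.exp (lam * t)) with hg
  have hg_cont : Continuous g := by fun_prop
  have hderiv : ∀ x : ℝ, HasDerivAt (fun t => t ^ 2 * Real.exp (lam * t)) (g x) x := by
    intro x
    have h1 : HasDerivAt (fun t : ℝ => lam * t) lam x := by
      simpa using (hasDerivAt_id x).const_mul lam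
    have h2 := (h1.exp)
    have h3 : HasDerivAt (fun t => t ^ 2 * Real.exp (lam * t))
        ((2:ℕ) * x ^ (2 - 1) * Real.exp (lam * x) + x ^ 2 * (Real.exp (lam * x) * lam)) x :=
      (hasDerivAt_pow 2 x).mul h2
    convert h3 using 1
    simp [hg]; ring
  have hFTC : ∀ y : ℝ, 0 ≤ y → ∫ t in (0)..y, g t = y ^ 2 * Real.exp (lam * y) := by
    intro y hy
    have := intervalIntegral.integral_eq_sub_of_hasDerivAt
      (f := fun t => t ^ 2 * Real.exp (lam * t)) (f' := g) (a := 0) (b := y)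
      (fun x _ => hderiv x) (hg_cont.intervalIntegrable 0 y)
    simpa using this
  have hkey := lintegral_comp_eq_lintegral_meas_le_mul μ (f := fun ω => |D ω|) (g := g)
    (Filter.Eventually.of_forall fun ω => abs_nonneg _) hD.abs.aemeasurable
    (fun t _ => hg_cont.intervalIntegrable 0 t)
    (by
      filter_upwards [self_mem_ae_restrict measurableSet_Ioi] with t (ht : (0:ℝ) < t)
      have := Real.exp_pos (lam * t)
      positivity)
  have hLHS : ∀ ω, ∫ t in (0)..(|D ω|), g t = (D ω) ^ 2 * Real.exp (lam * |D ω|) := by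
    intro ω; rw [hFTC _ (abs_nonneg _), sq_abs]
  -- bound the RHS
  have hpoint : ∀ t ∈ Ioi (0:ℝ), μ {a | t ≤ |D a|} * ENNReal.ofReal (g t)
      ≤ ENNReal.ofReal ((40 * C / c) * Real.exp (-(c / 4) * t)) := by
    intro t ht
    have ht0 : (0:ℝ) < t := ht
    have hgt : g t ≤ (40 / c) * Real.exp ((3 * c / 4) * t) := by
      have e1 : 2 * t ≤ (8 / c) * Real.exp ((c / 4) * t) := by
        have h := Real.add_one_le_exp ((c / 4) * t)
        rw [div_mul_eq_mul_div, le_div_iff₀ hc]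
        nlinarith [Real.exp_pos ((c/4)*t)]
      have e2 : lam * t ^ 2 ≤ (32 / c) * Real.exp ((c / 4) * t) := by
        have h8 : (c / 8) * t ≤ Real.exp ((c / 8) * t) := by
          have := Real.add_one_le_exp ((c / 8) * t); linarith
        have hsq : ((c / 8) * t) ^ 2 ≤ Real.exp ((c / 4) * t) := by
          have h0 : (0:ℝ) ≤ (c/8) * t := by positivity
          have := mul_le_mul h8 h8 h0 (Real.exp_pos _).le
          calc ((c / 8) * t) ^ 2 = ((c/8)*t) * ((c/8)*t) := sq ((c/8)*t)
            _ ≤ Real.exp ((c/8)*t) * Real.exp ((c/8)*t) := this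
            _ = Real.exp ((c / 4) * t) := by
                rw [← Real.exp_add]; congr 1; ring
        have hlc : lam ≤ c / 2 := hlamc
        have h64 : t ^ 2 ≤ (64 / c ^ 2) * Real.exp ((c / 4) * t) := by
          have hcc : (0:ℝ) < c ^ 2 := by positivity
          rw [div_mul_eq_mul_div, le_div_iff₀ hcc]
          nlinarith [hsq]
        rw [div_mul_eq_mul_div, le_div_iff₀ hc]
        nlinarith [Real.exp_pos ((c/4)*t), h64,
          mul_le_mul_of_nonneg_right hlc (mul_nonneg (sq_nonneg t) hc.le),
          mul_le_mul_of_nonneg_left h64 hc.le]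
      have e3 : Real.exp (lam * t) ≤ Real.exp ((c / 2) * t) := by
        apply Real.exp_le_exp.2; nlinarith
      have hepos : (0:ℝ) < Real.exp (lam * t) := Real.exp_pos _
      calc g t = (2 * t + lam * t ^ 2) * Real.exp (lam * t) := by rw [hg]; ring
        _ ≤ ((8 / c) * Real.exp ((c / 4) * t) + (32 / c) * Real.exp ((c / 4) * t))
              * Real.exp ((c / 2) * t) := by
            apply mul_le_mul (by linarith) e3 hepos.le (by positivity)
        _ = (40 / c) * Real.exp ((3 * c / 4) * t) := by
            rw [show (3 * c / 4) * t = (c/4)*t + (c/2)*t by ring, Real.exp_add]; ring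
    have hμt : μ {a | t ≤ |D a|} ≤ ENNReal.ofReal (C * Real.exp (-c * t)) := by
      have h1 := htail t ht0
      rw [← ENNReal.ofReal_toReal (measure_ne_top μ {a | t ≤ |D a|})]
      exact ENNReal.ofReal_le_ofReal h1
    calc μ {a | t ≤ |D a|} * ENNReal.ofReal (g t)
        ≤ ENNReal.ofReal (C * Real.exp (-c * t)) * ENNReal.ofReal (g t) :=
          mul_le_mul_left hμt _
      _ = ENNReal.ofReal ((C * Real.exp (-c * t)) * g t) := by
          rw [← ENNReal.ofReal_mul (by positivity : (0:ℝ) ≤ C * Real.exp (-c * t))]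
      _ ≤ ENNReal.ofReal ((40 * C / c) * Real.exp (-(c / 4) * t)) := by
          apply ENNReal.ofReal_le_ofReal
          have := mul_le_mul_of_nonneg_left hgt (by positivity : (0:ℝ) ≤ C * Real.exp (-c * t))
          calc C * Real.exp (-c * t) * g t
              ≤ C * Real.exp (-c * t) * ((40 / c) * Real.exp ((3 * c / 4) * t)) := this
            _ = (40 * C / c) * Real.exp (-(c / 4) * t) := by
                rw [show (-(c / 4) * t) = (-c*t) + (3*c/4)*t by ring, Real.exp_add]
                ring
  have hint_exp : IntegrableOn (fun t => (40 * C / c) * Real.exp (-(c / 4) * t)) (Ioi (0:ℝ)) := by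
    exact (exp_neg_integrableOn_Ioi 0 (by linarith : (0:ℝ) < c / 4)).const_mul _
  have hval : ∫ t in Ioi (0:ℝ), (40 * C / c) * Real.exp (-(c / 4) * t) = 160 * C / c ^ 2 := by
    rw [MeasureTheory.integral_const_mul]
    have : ∫ t in Ioi (0:ℝ), Real.exp (-(c / 4) * t) = 4 / c := by
      have h := integral_comp_mul_left_Ioi (fun y => Real.exp (-y)) 0 (by linarith : (0:ℝ) < c/4)
      simp only [mul_zero, neg_mul, smul_eq_mul] at h ⊢
      rw [h, integral_exp_neg_Ioi, neg_zero, Real.exp_zero]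
      field_simp
    rw [this]; field_simp; ring
  have hbound : ∫⁻ ω, ENNReal.ofReal ((D ω) ^ 2 * Real.exp (lam * |D ω|)) ∂μ
      ≤ ENNReal.ofReal (160 * C / c ^ 2) := by
    have e0 : ∫⁻ ω, ENNReal.ofReal ((D ω) ^ 2 * Real.exp (lam * |D ω|)) ∂μ
        = ∫⁻ t in Ioi 0, μ {a | t ≤ |D a|} * ENNReal.ofReal (g t) := by
      rw [← hkey]; congr 1; funext ω; rw [hLHS ω]
    rw [e0]
    calc ∫⁻ t in Ioi 0, μ {a | t ≤ |D a|} * ENNReal.ofReal (g t)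
        ≤ ∫⁻ t in Ioi 0, ENNReal.ofReal ((40 * C / c) * Real.exp (-(c / 4) * t)) := by
          apply lintegral_mono_ae
          filter_upwards [self_mem_ae_restrict measurableSet_Ioi] with t ht
          exact hpoint t ht
      _ = ENNReal.ofReal (∫ t in Ioi (0:ℝ), (40 * C / c) * Real.exp (-(c / 4) * t)) := by
          rw [ofReal_integral_eq_lintegral_ofReal hint_exp]
          filter_upwards with t; positivity
      _ = ENNReal.ofReal (160 * C / c ^ 2) := by rw [hval]
  have hmeas : AEStronglyMeasurable (fun ω => (D ω) ^ 2 * Real.exp (lam * |D ω|)) μ :=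
    ((hD.pow_const 2).mul ((hD.abs.const_mul lam).exp)).aestronglyMeasurable
  have hnn : 0 ≤ᵐ[μ] fun ω => (D ω) ^ 2 * Real.exp (lam * |D ω|) := by
    filter_upwards with ω; positivity
  have hInt : Integrable (fun ω => (D ω) ^ 2 * Real.exp (lam * |D ω|)) μ := by
    refine ⟨hmeas, ?_⟩
    rw [hasFiniteIntegral_iff_ofReal hnn]
    exact lt_of_le_of_lt hbound ENNReal.ofReal_lt_top
  refine ⟨hInt, ?_⟩
  rw [integral_eq_lintegral_of_nonneg_ae hnn hmeas]
  calc (∫⁻ ω, ENNReal.ofReal ((D ω) ^ 2 * Real.exp (lam * |D ω|)) ∂μ).toReal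
      ≤ (ENNReal.ofReal (160 * C / c ^ 2)).toReal := by
        apply ENNReal.toReal_mono ENNReal.ofReal_ne_top hbound
    _ = 160 * C / c ^ 2 := ENNReal.toReal_ofReal (by positivity)

lemma mgf_neg_bound {Ω : Type} [MeasurableSpace Ω] (μ : Measure Ω) [IsProbabilityMeasure μ]
    {c C lam : ℝ} (hc : 0 < c) (hC : 0 < C) (hlam : 0 < lam) (hlamc : lam ≤ c / 2)
    (hlamK : lam * (160 * C / c ^ 2) ≤ 1 / 16)
    (D : Ω → ℝ) (hD : Measurable D) (hDint : Integrable D μ)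
    (hmean : 1 / 4 ≤ ∫ ω, D ω ∂μ)
    (htail : ∀ s : ℝ, 0 < s → (μ {ω | s ≤ |D ω|}).toReal ≤ C * Real.exp (-c * s)) :
    Integrable (fun ω => Real.exp (lam * (-D ω))) μ ∧
      mgf (fun ω => -D ω) μ lam ≤ Real.exp (-(3/16) * lam) := by
  obtain ⟨hMint, hMle⟩ := moment_bound μ hc hC hlam hlamc D hD htail
  set bnd : Ω → ℝ := fun ω => 1 + (-lam) * D ω + lam ^ 2 * ((D ω) ^ 2 * Real.exp (lam * |D ω|))
    with hbnd
  have hbnd_int : Integrable bnd μ := by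
    apply Integrable.add
    · exact (integrable_const 1).add (hDint.const_mul (-lam))
    · exact hMint.const_mul _
  have hpt : ∀ ω, Real.exp (lam * (-D ω)) ≤ bnd ω := by
    intro ω
    have h := aux_exp_le (lam * (-D ω))
    have habs : |lam * (-D ω)| = lam * |D ω| := by
      rw [abs_mul, abs_neg, abs_of_nonneg hlam.le]
    have hsq : (lam * (-D ω)) ^ 2 = lam ^ 2 * (D ω) ^ 2 := by ring
    rw [habs, hsq] at h
    calc Real.exp (lam * (-D ω)) ≤ 1 + lam * (-D ω) + lam ^ 2 * (D ω) ^ 2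
          * Real.exp (lam * |D ω|) := h
      _ = bnd ω := by rw [hbnd]; ring
  have hint : Integrable (fun ω => Real.exp (lam * (-D ω))) μ := by
    apply Integrable.mono' hbnd_int
    · exact ((hD.neg.const_mul lam).exp).aestronglyMeasurable
    · filter_upwards with ω
      rw [Real.norm_eq_abs, abs_of_nonneg (Real.exp_pos _).le]
      exact hpt ω
  refine ⟨hint, ?_⟩
  have hle1 : mgf (fun ω => -D ω) μ lam ≤ ∫ ω, bnd ω ∂μ := by
    rw [mgf]
    exact integral_mono hint hbnd_int (fun ω => hpt ω)
  have i1 : Integrable (fun ω => 1 + (-lam) * D ω) μ :=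
    (integrable_const 1).add (hDint.const_mul (-lam))
  have i2 : Integrable (fun ω => lam ^ 2 * ((D ω) ^ 2 * Real.exp (lam * |D ω|))) μ :=
    hMint.const_mul _
  have hintval : ∫ ω, bnd ω ∂μ = 1 + (-lam) * ∫ ω, D ω ∂μ
      + lam ^ 2 * ∫ ω, (D ω) ^ 2 * Real.exp (lam * |D ω|) ∂μ := by
    calc ∫ ω, bnd ω ∂μ
        = ∫ ω, (1 + (-lam) * D ω) + lam ^ 2 * ((D ω) ^ 2 * Real.exp (lam * |D ω|)) ∂μ := by
          rw [hbnd]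
      _ = (∫ ω, 1 + (-lam) * D ω ∂μ)
          + ∫ ω, lam ^ 2 * ((D ω) ^ 2 * Real.exp (lam * |D ω|)) ∂μ := integral_add i1 i2
      _ = 1 + (-lam) * ∫ ω, D ω ∂μ
          + lam ^ 2 * ∫ ω, (D ω) ^ 2 * Real.exp (lam * |D ω|) ∂μ := by
          rw [integral_add (integrable_const 1) (hDint.const_mul (-lam)),
            integral_const, integral_const_mul, integral_const_mul]
          simp
  have h2 : ∫ ω, bnd ω ∂μ ≤ 1 + (-(3/16)) * lam := by
    rw [hintval]
    have hA : (-lam) * ∫ ω, D ω ∂μ ≤ (-lam) * (1/4) := by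
      apply mul_le_mul_of_nonpos_left hmean (by linarith)
    have hB : lam ^ 2 * ∫ ω, (D ω) ^ 2 * Real.exp (lam * |D ω|) ∂μ ≤ lam * (1/16) := by
      calc lam ^ 2 * ∫ ω, (D ω) ^ 2 * Real.exp (lam * |D ω|) ∂μ
          ≤ lam ^ 2 * (160 * C / c ^ 2) := by
            apply mul_le_mul_of_nonneg_left hMle (by positivity)
        _ = lam * (lam * (160 * C / c ^ 2)) := by ring
        _ ≤ lam * (1/16) := by apply mul_le_mul_of_nonneg_left hlamK hlam.le
    linarith
  calc mgf (fun ω => -D ω) μ lam ≤ 1 + (-(3/16)) * lam := le_trans hle1 h2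
    _ ≤ Real.exp (-(3/16) * lam) := by
        have := Real.add_one_le_exp (-(3/16) * lam); linarith

end aux

section aux2
open Real Set

theorem stmt17 (c C : ℝ) (hc : 0 < c) (hC : 0 < C) :
    ∃ C' c' : ℝ, 0 < C' ∧ 0 < c' ∧
      ∀ (Ω : Type) (_ : MeasurableSpace Ω) (μ : Measure Ω), IsProbabilityMeasure μ →
        ∀ (m : ℕ), 1 ≤ m →
          ∀ (A B : ℕ → Ω → ℝ),
            iIndepFun (Sum.elim A B) μ →
            (∀ t (s : ℝ), 0 ≤ s →
              (μ {ω | (m : ℝ) + s < A t ω}).toReal ≤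
                Real.exp (-c * (Real.sqrt m + s / Real.sqrt m) ^ 2)) →
            (∀ t, 1 / 4 ≤ ∫ ω, B t ω ∂μ) →
            (∀ t (s : ℝ), 0 < s →
              (μ {ω | s ≤ |B t ω|}).toReal ≤ C * Real.exp (-c * s)) →
            ∑' t : ℕ, (μ {ω | 2 * (m : ℝ) <
                A 0 ω - ∑ k ∈ Finset.range t, B k ω}).toReal ≤
              C' * Real.exp (-c' * m) := by
  set lam : ℝ := min (c / 2) (c ^ 2 / (2560 * C)) with hlamdef
  have hlam : 0 < lam := lt_min (by positivity) (by positivity)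
  have hlamc : lam ≤ c / 2 := min_le_left _ _
  have hlamK : lam * (160 * C / c ^ 2) ≤ 1 / 16 := by
    have h1 : lam ≤ c ^ 2 / (2560 * C) := min_le_right _ _
    have h2 : (0:ℝ) < 160 * C / c ^ 2 := by positivity
    calc lam * (160 * C / c ^ 2) ≤ (c ^ 2 / (2560 * C)) * (160 * C / c ^ 2) :=
          mul_le_mul_of_nonneg_right h1 h2.le
      _ = 1 / 16 := by field_simp; ring
  set r : ℝ := Real.exp (-lam / 16) with hrdef
  have hr0 : 0 < r := Real.exp_pos _
  have hr1 : r < 1 := Real.exp_lt_one_iff.mpr (by linarith)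
  have h1r : 0 < 1 - r := by linarith
  refine ⟨2 * (1 - r)⁻¹, lam, mul_pos two_pos (inv_pos.mpr h1r), hlam, ?_⟩
  intro Ω mΩ μ hprob m hm A B hindep hA hBmean hBtail
  have hm1 : (1:ℝ) ≤ (m:ℝ) := by exact_mod_cast hm
  -- B is integrable
  have hBint : ∀ k, Integrable (B k) μ := by
    intro k
    by_contra h
    have hk := hBmean k
    rw [integral_undef h] at hk
    linarith
  -- measurable modification
  set D : ℕ → Ω → ℝ := fun k => ((hBint k).aestronglyMeasurable).mk (B k) with hDdef
  have hDmeas : ∀ k, Measurable (D k) :=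
    fun k => ((hBint k).aestronglyMeasurable).measurable_mk
  have hae : ∀ k, B k =ᵐ[μ] D k := fun k => ((hBint k).aestronglyMeasurable).ae_eq_mk
  have hDint : ∀ k, Integrable (D k) μ := fun k => (hBint k).congr (hae k)
  have hDmean : ∀ k, 1 / 4 ≤ ∫ ω, D k ω ∂μ := by
    intro k
    rw [← integral_congr_ae (hae k)]
    exact hBmean k
  have hDtail : ∀ k (s : ℝ), 0 < s → (μ {ω | s ≤ |D k ω|}).toReal ≤ C * Real.exp (-c * s) := by
    intro k s hs
    have : μ {ω | s ≤ |D k ω|} = μ {ω | s ≤ |B k ω|} := by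
      apply measure_congr
      rw [Filter.eventuallyEq_set]
      filter_upwards [hae k] with ω hω
      simp [hω]
    rw [this]
    exact hBtail k s hs
  -- the auxiliary family
  set Y : ℕ ⊕ ℕ → Ω → ℝ := Sum.elim (fun _ _ => (0:ℝ)) (fun k ω => -(D k ω)) with hYdef
  have hYmeas : ∀ i, Measurable (Y i) := by
    intro i
    cases i with
    | inl j => exact measurable_const
    | inr k => exact (hDmeas k).neg
  have hYindep : iIndepFun Y μ := by
    classical
    rw [iIndepFun_iff_measure_inter_preimage_eq_mul]
    intro S sets H
    set sets' : ℕ ⊕ ℕ → Set ℝ := fun i =>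
      Sum.elim (fun j => if (0:ℝ) ∈ sets (Sum.inl j) then (univ : Set ℝ) else (∅ : Set ℝ))
        (fun k => (fun x : ℝ => -x) ⁻¹' (sets (Sum.inr k))) i with hsets'
    have H' : ∀ i, i ∈ S → MeasurableSet[Real.measurableSpace] (sets' i) := by
      intro i hi
      cases i with
      | inl j =>
        simp only [hsets', Sum.elim_inl]
        split_ifs <;> [exact MeasurableSet.univ; exact MeasurableSet.empty]
      | inr k =>
        exact measurable_neg (H _ hi)
    have key := hindep.measure_inter_preimage_eq_mul S H'
    have haeP : ∀ i, (Sum.elim A B i) ⁻¹' sets' i =ᵐ[μ] Y i ⁻¹' sets i := by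
      intro i
      cases i with
      | inl j =>
        apply Filter.EventuallyEq.of_eq
        simp only [hsets', hYdef, Sum.elim_inl]
        by_cases h0 : (0:ℝ) ∈ sets (Sum.inl j) <;> simp [h0, Set.preimage] <;> rfl
      | inr k =>
        rw [Filter.eventuallyEq_set]
        filter_upwards [hae k] with ω hω
        simp only [hsets', hYdef, Sum.elim_inr, Set.mem_preimage, hω]
    have hinter : μ (⋂ i ∈ S, Y i ⁻¹' sets i) = μ (⋂ i ∈ S, (Sum.elim A B i) ⁻¹' sets' i) := by
      apply measure_congr
      rw [Filter.eventuallyEq_set]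
      have hball : ∀ᵐ ω ∂μ, ∀ i ∈ S, (ω ∈ (Sum.elim A B i) ⁻¹' sets' i ↔ ω ∈ Y i ⁻¹' sets i) := by
        rw [Filter.eventually_all_finset]
        intro i _
        have := haeP i
        rw [Filter.eventuallyEq_set] at this
        exact this
      filter_upwards [hball] with ω hω
      simp only [Set.mem_iInter]
      constructor
      · intro h i hi; exact (hω i hi).mpr (h i hi)
      · intro h i hi; exact (hω i hi).mp (h i hi)
    have hfac : ∀ i ∈ S, μ ((Sum.elim A B i) ⁻¹' sets' i) = μ (Y i ⁻¹' sets i) :=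
      fun i _ => measure_congr (haeP i)
    rw [hinter, key]
    exact Finset.prod_congr rfl hfac
  -- per-variable mgf facts
  have hmgf : ∀ k, Integrable (fun ω => Real.exp (lam * (-(D k) ω))) μ ∧
      mgf (fun ω => -(D k) ω) μ lam ≤ Real.exp (-(3/16) * lam) :=
    fun k => mgf_neg_bound μ hc hC hlam hlamc hlamK (D k) (hDmeas k) (hDint k)
      (hDmean k) (hDtail k)
  -- per-t bound
  have hterm : ∀ t : ℕ,
      (μ {ω | 2 * (m : ℝ) < A 0 ω - ∑ k ∈ Finset.range t, B k ω}).toReal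
        ≤ 2 * Real.exp (-lam * m) * r ^ t := by
    intro t
    set St : Finset (ℕ ⊕ ℕ) := (Finset.range t).map ⟨Sum.inr, Sum.inr_injective⟩ with hStdef
    set F : Ω → ℝ := ∑ i ∈ St, Y i with hFdef
    have hFval : ∀ ω, F ω = -∑ k ∈ Finset.range t, D k ω := by
      intro ω
      rw [hFdef, Finset.sum_apply, hStdef, Finset.sum_map, ← Finset.sum_neg_distrib]
      rfl
    have hint : Integrable (fun ω => Real.exp (lam * F ω)) μ := by
      apply hYindep.integrable_exp_mul_sum hYmeas
      intro i hi
      obtain ⟨k, _, rfl⟩ := Finset.mem_map.mp hi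
      exact (hmgf k).1
    have chernoff := measure_ge_le_exp_mul_mgf (μ := μ) (X := F) ((m:ℝ) - (t:ℝ)/8) hlam.le hint
    have hmgfF : mgf F μ lam ≤ Real.exp (-(3/16) * lam) ^ t := by
      rw [hFdef, hYindep.mgf_sum hYmeas St, hStdef, Finset.prod_map]
      calc ∏ k ∈ Finset.range t, mgf (Y ((⟨Sum.inr, Sum.inr_injective⟩ : ℕ ↪ ℕ ⊕ ℕ) k)) μ lam
          ≤ ∏ _k ∈ Finset.range t, Real.exp (-(3/16) * lam) := by
            apply Finset.prod_le_prod
            · intro k _; exact mgf_nonneg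
            · intro k _; exact (hmgf k).2
        _ = Real.exp (-(3/16) * lam) ^ t := by
            rw [Finset.prod_const, Finset.card_range]
    -- event decomposition
    set E : Set Ω := {ω | 2 * (m : ℝ) < A 0 ω - ∑ k ∈ Finset.range t, B k ω} with hEdef
    set E1 : Set Ω := {ω | (m : ℝ) + (t:ℝ)/8 < A 0 ω} with hE1def
    set E2 : Set Ω := {ω | (m:ℝ) - (t:ℝ)/8 ≤ -∑ k ∈ Finset.range t, B k ω} with hE2def
    have hsub : E ⊆ E1 ∪ E2 := by
      intro ω hω
      simp only [hEdef, Set.mem_setOf_eq] at hω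
      by_contra hcon
      simp only [hE1def, hE2def, Set.mem_union, Set.mem_setOf_eq, not_or, not_lt, not_le] at hcon
      obtain ⟨h1, h2⟩ := hcon
      linarith
    have hE2eq : μ E2 = μ {ω | (m:ℝ) - (t:ℝ)/8 ≤ F ω} := by
      apply measure_congr
      rw [Filter.eventuallyEq_set]
      have hball : ∀ᵐ ω ∂μ, ∀ k ∈ Finset.range t, B k ω = D k ω := by
        rw [Filter.eventually_all_finset]
        intro k _
        exact hae k
      filter_upwards [hball] with ω hω
      have : ∑ k ∈ Finset.range t, B k ω = ∑ k ∈ Finset.range t, D k ω :=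
        Finset.sum_congr rfl hω
      simp only [hE2def, Set.mem_setOf_eq, hFval ω, this]
    have hE1le : (μ E1).toReal ≤ Real.exp (-lam * m) * r ^ t := by
      have h1 := hA 0 ((t:ℝ)/8) (by positivity)
      have hsqrt : (0:ℝ) < Real.sqrt m := Real.sqrt_pos.mpr (by linarith)
      have hexpand : (Real.sqrt m + ((t:ℝ)/8) / Real.sqrt m) ^ 2 ≥ (m:ℝ) + (t:ℝ)/4 := by
        have hsq : Real.sqrt m ^ 2 = (m:ℝ) := Real.sq_sqrt (by linarith)
        have hcross : Real.sqrt m * (((t:ℝ)/8) / Real.sqrt m) = (t:ℝ)/8 :=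
          mul_div_cancel₀ _ hsqrt.ne'
        have hb2 : (((t:ℝ)/8) / Real.sqrt m) ^ 2 ≥ 0 := sq_nonneg _
        nlinarith
      calc (μ E1).toReal ≤ Real.exp (-c * (Real.sqrt m + ((t:ℝ)/8) / Real.sqrt m) ^ 2) := h1
        _ ≤ Real.exp (-lam * m + (-lam/16) * t) := by
            apply Real.exp_le_exp.2
            have hlc : lam ≤ c := by linarith
            have htn : (0:ℝ) ≤ (t:ℝ) := Nat.cast_nonneg t
            have hmn : (0:ℝ) ≤ (m:ℝ) := by linarith
            nlinarith [mul_le_mul_of_nonneg_left hexpand hc.le,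
              mul_nonneg (sub_nonneg.mpr hlc) hmn,
              mul_nonneg (by linarith : (0:ℝ) ≤ c/4 - lam/16) htn]
        _ = Real.exp (-lam * m) * r ^ t := by
            rw [Real.exp_add, hrdef, ← Real.exp_nat_mul]
            ring_nf
    have hE2le : (μ E2).toReal ≤ Real.exp (-lam * m) * r ^ t := by
      rw [hE2eq]
      calc (μ {ω | (m:ℝ) - (t:ℝ)/8 ≤ F ω}).toReal
          ≤ Real.exp (-lam * ((m:ℝ) - (t:ℝ)/8)) * mgf F μ lam := chernoff
        _ ≤ Real.exp (-lam * ((m:ℝ) - (t:ℝ)/8)) * Real.exp (-(3/16) * lam) ^ t := by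
            apply mul_le_mul_of_nonneg_left hmgfF (Real.exp_pos _).le
        _ = Real.exp (-lam * m) * r ^ t := by
            rw [hrdef, ← Real.exp_nat_mul, ← Real.exp_nat_mul, ← Real.exp_add, ← Real.exp_add]
            congr 1
            ring
    have hEle : μ E ≤ μ E1 + μ E2 := (measure_mono hsub).trans (measure_union_le E1 E2)
    have hfin1 : μ E1 ≠ ⊤ := measure_ne_top μ E1
    have hfin2 : μ E2 ≠ ⊤ := measure_ne_top μ E2
    calc (μ E).toReal ≤ ((μ E1) + (μ E2)).toReal := by
          apply ENNReal.toReal_mono _ hEle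
          exact ENNReal.add_ne_top.mpr ⟨hfin1, hfin2⟩
      _ = (μ E1).toReal + (μ E2).toReal := ENNReal.toReal_add hfin1 hfin2
      _ ≤ 2 * Real.exp (-lam * m) * r ^ t := by linarith
  -- sum up
  have hgsum : Summable (fun t : ℕ => 2 * Real.exp (-lam * m) * r ^ t) :=
    (summable_geometric_of_lt_one hr0.le hr1).mul_left _
  have hfnonneg : ∀ t : ℕ, 0 ≤ (μ {ω | 2 * (m : ℝ) <
      A 0 ω - ∑ k ∈ Finset.range t, B k ω}).toReal := fun t => ENNReal.toReal_nonneg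
  have hfsum : Summable (fun t : ℕ => (μ {ω | 2 * (m : ℝ) <
      A 0 ω - ∑ k ∈ Finset.range t, B k ω}).toReal) :=
    Summable.of_nonneg_of_le hfnonneg hterm hgsum
  calc ∑' t : ℕ, (μ {ω | 2 * (m : ℝ) < A 0 ω - ∑ k ∈ Finset.range t, B k ω}).toReal
      ≤ ∑' t : ℕ, 2 * Real.exp (-lam * m) * r ^ t := Summable.tsum_le_tsum hterm hfsum hgsum
    _ = 2 * Real.exp (-lam * m) * (1 - r)⁻¹ := by
        rw [tsum_mul_left, tsum_geometric_of_lt_one hr0.le hr1]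
    _ = 2 * (1 - r)⁻¹ * Real.exp (-lam * m) := by ring

end aux2
end

section
/- Let m ≥ 4, let N ~ N(0,1) and W ~ χ²_{m−1} be independent, and define T = |N| − W/(2m) if |N| ≤ m, and T = −√(m² + W) otherwise. Then E[T] ≥ 1/4. -/
set_option maxHeartbeats 1000000
open MeasureTheory ProbabilityTheory Real Set Filter
open scoped ENNReal NNReal

noncomputable def gpdf (x : ℝ) : ℝ := (Real.sqrt (2 * π))⁻¹ * Real.exp (-x ^ 2 / 2)

lemma gpdf_eq : gaussianPDFReal 0 1 = gpdf := by
  ext x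
  simp [gaussianPDFReal, gpdf]

lemma gpdf_nonneg (x : ℝ) : 0 ≤ gpdf x := by unfold gpdf; positivity

lemma gaussian_integral_eq (f : ℝ → ℝ) :
    ∫ x, f x ∂(gaussianReal 0 1) = ∫ x, gpdf x * f x := by
  rw [gaussianReal_of_var_ne_zero 0 one_ne_zero]
  have h : (gaussianPDF 0 1) = fun x => ((gpdf x).toNNReal : ℝ≥0∞) := by
    ext x; rw [gaussianPDF, gpdf_eq]; rfl
  rw [h, integral_withDensity_eq_integral_smul]
  · congr 1; ext x
    rw [NNReal.smul_def, smul_eq_mul, Real.coe_toNNReal _ (gpdf_nonneg x)]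
  · exact (continuous_const.mul ((continuous_pow 2).neg.div_const 2).rexp).measurable.real_toNNReal

lemma gaussian_integrable_iff (f : ℝ → ℝ) :
    Integrable f (gaussianReal 0 1) ↔ Integrable (fun x => gpdf x * f x) volume := by
  rw [gaussianReal_of_var_ne_zero 0 one_ne_zero]
  have h : (gaussianPDF 0 1) = fun x => ((gpdf x).toNNReal : ℝ≥0∞) := by
    ext x; rw [gaussianPDF, gpdf_eq]; rfl
  have hmeas : Measurable fun x => (gpdf x).toNNReal :=
    (continuous_const.mul ((continuous_pow 2).neg.div_const 2).rexp).measurable.real_toNNReal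
  rw [h, integrable_withDensity_iff_integrable_coe_smul hmeas]
  constructor <;> intro hint <;> refine hint.congr (ae_of_all _ fun x => ?_) <;>
    simp [NNReal.smul_def, Real.coe_toNNReal _ (gpdf_nonneg x)]

lemma exp_form (x : ℝ) : Real.exp (-x ^ 2 / 2) = Real.exp (-(1/2 : ℝ) * x ^ 2) := by ring_nf

lemma V0 : ∫ x : ℝ, Real.exp (-x ^ 2 / 2) = Real.sqrt (2 * π) := by
  simp_rw [exp_form]
  rw [integral_gaussian]
  rw [show π / (1/2:ℝ) = 2 * π by ring]

lemma V0' : ∫ x : ℝ in Ioi 0, Real.exp (-x ^ 2 / 2) = Real.sqrt (2 * π) / 2 := by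
  simp_rw [exp_form]
  rw [integral_gaussian_Ioi]
  rw [show π / (1/2:ℝ) = 2 * π by ring]

lemma int_pow_exp (n : ℕ) : Integrable (fun x : ℝ => x ^ n * Real.exp (-x ^ 2 / 2)) := by
  simp_rw [exp_form]
  have hn : (-1:ℝ) < n := lt_of_lt_of_le neg_one_lt_zero (Nat.cast_nonneg n)
  have := integrable_rpow_mul_exp_neg_mul_sq (b := 1/2) (by norm_num) hn
  simpa [Real.rpow_natCast] using this

lemma hD1 (x : ℝ) : HasDerivAt (fun y : ℝ => -Real.exp (-y ^ 2 / 2))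
    (x * Real.exp (-x ^ 2 / 2)) x := by
  have h' := (hasDerivAt_pow 2 x).neg.div_const 2
  have h : HasDerivAt (fun y : ℝ => -y ^ 2 / 2) (-x) x := by
    refine h'.congr_deriv ?_
    push_cast
    ring
  have := (h.exp).neg
  refine this.congr_deriv ?_
  ring

lemma tendsto_poly_exp (n : ℕ) :
    Tendsto (fun x : ℝ => x ^ n * Real.exp (-x ^ 2 / 2)) atTop (nhds 0) := by
  have h := rpow_mul_exp_neg_mul_sq_isLittleO_exp_neg (b := 1/2) (by norm_num) (n : ℝ)
  have h2 : Tendsto (fun x : ℝ => Real.exp (-(1/2:ℝ) * x)) atTop (nhds 0) :=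
    Real.tendsto_exp_atBot.comp (Tendsto.const_mul_atTop_of_neg (by norm_num) tendsto_id)
  have h3 := h.trans_tendsto h2
  refine h3.congr' ?_
  filter_upwards [eventually_gt_atTop (0:ℝ)] with x hx
  rw [Real.rpow_natCast]
  ring_nf

lemma V1 : ∫ x : ℝ in Ioi 0, x * Real.exp (-x ^ 2 / 2) = 1 := by
  have hint : IntegrableOn (fun x : ℝ => x * Real.exp (-x ^ 2 / 2)) (Ioi 0) := by
    have := int_pow_exp 1; simpa using this.integrableOn
  have htend : Tendsto (fun x : ℝ => -Real.exp (-x ^ 2 / 2)) atTop (nhds 0) := by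
    have := (tendsto_poly_exp 0).neg
    simpa using this
  have := integral_Ioi_of_hasDerivAt_of_tendsto' (a := 0)
    (fun x _ => hD1 x) hint htend
  simpa using this

lemma hD2 (x : ℝ) : HasDerivAt (fun y : ℝ => -y * Real.exp (-y ^ 2 / 2))
    ((x ^ 2 - 1) * Real.exp (-x ^ 2 / 2)) x := by
  have h' := (hasDerivAt_pow 2 x).neg.div_const 2
  have h : HasDerivAt (fun y : ℝ => -y ^ 2 / 2) (-x) x := by
    refine h'.congr_deriv ?_; push_cast; ring
  have := (hasDerivAt_id x).neg.mul h.exp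
  refine this.congr_deriv ?_
  simp only [Pi.neg_apply, id_eq]
  ring

lemma hD4 (x : ℝ) : HasDerivAt (fun y : ℝ => -y ^ 3 * Real.exp (-y ^ 2 / 2))
    ((x ^ 4 - 3 * x ^ 2) * Real.exp (-x ^ 2 / 2)) x := by
  have h' := (hasDerivAt_pow 2 x).neg.div_const 2
  have h : HasDerivAt (fun y : ℝ => -y ^ 2 / 2) (-x) x := by
    refine h'.congr_deriv ?_; push_cast; ring
  have := ((hasDerivAt_pow 3 x).neg).mul h.exp
  refine this.congr_deriv ?_
  push_cast [Pi.neg_apply]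
  ring

lemma int_exp01 : Integrable (fun x : ℝ => Real.exp (-x ^ 2 / 2)) := by
  have := int_pow_exp 0
  refine this.congr (ae_of_all _ fun x => by ring)

lemma V2 : ∫ x : ℝ in Ioi 0, x ^ 2 * Real.exp (-x ^ 2 / 2) = Real.sqrt (2 * π) / 2 := by
  have hint : IntegrableOn (fun x : ℝ => (x ^ 2 - 1) * Real.exp (-x ^ 2 / 2)) (Ioi 0) := by
    have h2 := (int_pow_exp 2).sub int_exp01
    refine (h2.congr (ae_of_all _ fun x => ?_)).integrableOn
    simp only [Pi.sub_apply]; ring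
  have htend : Tendsto (fun x : ℝ => -x * Real.exp (-x ^ 2 / 2)) atTop (nhds 0) := by
    have h := (tendsto_poly_exp 1).neg
    rw [neg_zero] at h
    exact h.congr (fun x => by ring)
  have key := integral_Ioi_of_hasDerivAt_of_tendsto' (a := 0) (fun x _ => hD2 x) hint htend
  have hsplit : ∫ x : ℝ in Ioi 0, (x ^ 2 - 1) * Real.exp (-x ^ 2 / 2)
      = (∫ x : ℝ in Ioi 0, x ^ 2 * Real.exp (-x ^ 2 / 2))
        - ∫ x : ℝ in Ioi 0, Real.exp (-x ^ 2 / 2) := by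
    rw [← integral_sub ((int_pow_exp 2).integrableOn) (int_exp01.integrableOn)]
    exact integral_congr_ae (ae_of_all _ fun x => by ring)
  rw [hsplit, V0'] at key
  simp only [neg_zero, zero_mul] at key
  linarith [key]

lemma V4 : ∫ x : ℝ in Ioi 0, x ^ 4 * Real.exp (-x ^ 2 / 2) = 3 * (Real.sqrt (2 * π) / 2) := by
  have hint : IntegrableOn (fun x : ℝ => (x ^ 4 - 3 * x ^ 2) * Real.exp (-x ^ 2 / 2)) (Ioi 0) := by
    have h2 := (int_pow_exp 4).sub ((int_pow_exp 2).const_mul 3)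
    refine (h2.congr (ae_of_all _ fun x => ?_)).integrableOn
    simp only [Pi.sub_apply]; ring
  have htend : Tendsto (fun x : ℝ => -x ^ 3 * Real.exp (-x ^ 2 / 2)) atTop (nhds 0) := by
    have h := (tendsto_poly_exp 3).neg
    rw [neg_zero] at h
    exact h.congr (fun x => by ring)
  have key := integral_Ioi_of_hasDerivAt_of_tendsto' (a := 0) (fun x _ => hD4 x) hint htend
  have hsplit : ∫ x : ℝ in Ioi 0, (x ^ 4 - 3 * x ^ 2) * Real.exp (-x ^ 2 / 2)
      = (∫ x : ℝ in Ioi 0, x ^ 4 * Real.exp (-x ^ 2 / 2))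
        - 3 * ∫ x : ℝ in Ioi 0, x ^ 2 * Real.exp (-x ^ 2 / 2) := by
    rw [← integral_const_mul, ← integral_sub ((int_pow_exp 4).integrableOn)
      (((int_pow_exp 2).const_mul 3).integrableOn)]
    exact integral_congr_ae (ae_of_all _ fun x => by ring)
  rw [hsplit, V2] at key
  norm_num at key
  rw [Real.sqrt_mul (by norm_num : (0:ℝ) ≤ 2)]
  linarith [key]

lemma sqrt2pi_pos : 0 < Real.sqrt (2 * π) := Real.sqrt_pos.mpr (by positivity)

lemma abs_pow4 (y : ℝ) : |y| ^ 4 = y ^ 4 := by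
  rw [show (4:ℕ) = 2*2 from rfl, pow_mul, sq_abs, ← pow_mul]

lemma W1 : ∫ x : ℝ, |x| * Real.exp (-x ^ 2 / 2) = 2 := by
  have h := integral_comp_abs (f := fun t : ℝ => t * Real.exp (-t ^ 2 / 2))
  rw [V1] at h
  simp only [sq_abs] at h
  rw [h]; norm_num

lemma W2 : ∫ x : ℝ, x ^ 2 * Real.exp (-x ^ 2 / 2) = Real.sqrt (2 * π) := by
  have h := integral_comp_abs (f := fun t : ℝ => t ^ 2 * Real.exp (-t ^ 2 / 2))
  rw [V2] at h
  simp only [sq_abs] at h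
  rw [h]; ring

lemma W4 : ∫ x : ℝ, x ^ 4 * Real.exp (-x ^ 2 / 2) = 3 * Real.sqrt (2 * π) := by
  have h := integral_comp_abs (f := fun t : ℝ => t ^ 4 * Real.exp (-t ^ 2 / 2))
  rw [V4] at h
  simp only [sq_abs, abs_pow4] at h
  rw [h]; ring

lemma int_abs_exp : Integrable (fun x : ℝ => |x| * Real.exp (-x ^ 2 / 2)) := by
  have := (int_pow_exp 1).abs
  refine this.congr (ae_of_all _ fun x => ?_)
  simp [abs_mul, abs_of_nonneg (Real.exp_pos _).le]

-- Gaussian moments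
lemma integrable_gauss_pow (n : ℕ) : Integrable (fun x : ℝ => x ^ n) (gaussianReal 0 1) := by
  rw [gaussian_integrable_iff]
  have := (int_pow_exp n).const_mul (Real.sqrt (2 * π))⁻¹
  refine this.congr (ae_of_all _ fun x => ?_)
  unfold gpdf; ring

lemma integrable_gauss_abs : Integrable (fun x : ℝ => |x|) (gaussianReal 0 1) := by
  rw [gaussian_integrable_iff]
  have := int_abs_exp.const_mul (Real.sqrt (2 * π))⁻¹
  refine this.congr (ae_of_all _ fun x => ?_)
  unfold gpdf; ring

lemma E2 : ∫ x, x ^ 2 ∂(gaussianReal 0 1) = 1 := by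
  rw [gaussian_integral_eq]
  unfold gpdf
  simp_rw [mul_assoc, integral_const_mul, mul_comm (Real.exp _)]
  rw [W2, inv_mul_cancel₀ sqrt2pi_pos.ne']

lemma E4 : ∫ x, x ^ 4 ∂(gaussianReal 0 1) = 3 := by
  rw [gaussian_integral_eq]
  unfold gpdf
  simp_rw [mul_assoc, integral_const_mul, mul_comm (Real.exp _)]
  rw [W4, mul_comm (3:ℝ), ← mul_assoc, inv_mul_cancel₀ sqrt2pi_pos.ne', one_mul]

lemma Eabs : ∫ x, |x| ∂(gaussianReal 0 1) = 2 / Real.sqrt (2 * π) := by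
  rw [gaussian_integral_eq]
  unfold gpdf
  simp_rw [mul_assoc, integral_const_mul, mul_comm (Real.exp _)]
  rw [W1, inv_mul_eq_div]

lemma Eabs_ge : (0.79 : ℝ) ≤ ∫ x, |x| ∂(gaussianReal 0 1) := by
  rw [Eabs]
  have h1 : Real.sqrt (2 * π) ≤ 2.51 := by
    rw [show (2.51 : ℝ) = Real.sqrt (2.51 ^ 2) from (Real.sqrt_sq (by norm_num)).symm]
    exact Real.sqrt_le_sqrt (by nlinarith [Real.pi_lt_d2])
  rw [le_div_iff₀ sqrt2pi_pos]
  nlinarith [h1]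

lemma measurable_sumsq (k : ℕ) : Measurable (fun x : Fin k → ℝ => ∑ i, (x i) ^ 2) :=
  Finset.measurable_sum _ (fun i _ => (measurable_pi_apply i).pow_const 2)

instance chiSq_prob (k : ℕ) : IsProbabilityMeasure (chiSq k) :=
  Measure.isProbabilityMeasure_map (measurable_sumsq k).aemeasurable

lemma pi_map_eval (k : ℕ) (i : Fin k) :
    (Measure.pi fun _ : Fin k => gaussianReal 0 1).map (fun x => x i) = gaussianReal 0 1 := by
  ext s hs
  rw [Measure.map_apply (measurable_pi_apply i) hs]
  have hpre : (fun x : Fin k → ℝ => x i) ⁻¹' s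
      = Set.pi Set.univ (Function.update (fun _ => Set.univ) i s) := Set.eval_preimage
  rw [hpre, Measure.pi_pi]
  rw [Finset.prod_eq_single i]
  · simp
  · intro j _ hj
    rw [Function.update_of_ne hj]
    simp
  · simp

lemma integrable_eval_sq (k : ℕ) (i : Fin k) :
    Integrable (fun x : Fin k → ℝ => (x i) ^ 2)
      (Measure.pi fun _ : Fin k => gaussianReal 0 1) := by
  have h : Integrable (fun y : ℝ => y ^ 2)
      ((Measure.pi fun _ : Fin k => gaussianReal 0 1).map (fun x => x i)) := by
    rw [pi_map_eval]; exact integrable_gauss_pow 2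
  exact (integrable_map_measure ((continuous_pow 2).measurable.aestronglyMeasurable)
    (measurable_pi_apply i).aemeasurable).1 h

lemma integrable_id_chiSq (k : ℕ) : Integrable (fun w => w) (chiSq k) := by
  refine (integrable_map_measure
    (measurable_id.aestronglyMeasurable : AEStronglyMeasurable (fun y : ℝ => y) _)
    (measurable_sumsq k).aemeasurable).2 ?_
  simpa [Function.comp] using
    integrable_finset_sum Finset.univ (fun i (_ : i ∈ Finset.univ) => integrable_eval_sq k i)

lemma integral_id_chiSq (k : ℕ) : ∫ w, w ∂(chiSq k) = k := by
  have key := integral_map (μ := Measure.pi fun _ : Fin k => gaussianReal 0 1)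
    (measurable_sumsq k).aemeasurable
    (measurable_id.aestronglyMeasurable : AEStronglyMeasurable (fun y : ℝ => y) _)
  simp only [id_eq] at key
  rw [show chiSq k = (Measure.pi fun _ : Fin k => gaussianReal 0 1).map
    (fun x => ∑ i, (x i) ^ 2) from rfl, key,
    integral_finset_sum _ (fun i _ => integrable_eval_sq k i)]
  have h1 : ∀ i : Fin k, ∫ x : Fin k → ℝ, (x i) ^ 2
      ∂(Measure.pi fun _ : Fin k => gaussianReal 0 1) = 1 := by
    intro i
    have h2 := integral_map (μ := Measure.pi fun _ : Fin k => gaussianReal 0 1)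
      (measurable_pi_apply i).aemeasurable
      ((continuous_pow 2).measurable.aestronglyMeasurable (μ := _))
    rw [pi_map_eval, E2] at h2
    exact h2.symm
  simp [h1]

lemma chiSq_nonneg (k : ℕ) : ∀ᵐ w ∂(chiSq k), 0 ≤ w := by
  unfold chiSq
  rw [ae_map_iff (measurable_sumsq k).aemeasurable measurableSet_Ici]
  exact ae_of_all _ fun x => Finset.sum_nonneg fun i _ => sq_nonneg _

/-- `T = |N| - W/(2m)` if `|N| ≤ m`, and `T = -√(m² + W)` otherwise, where `N ~ N(0,1)` and
`W ~ χ²_{m-1}` are independent (modelled by the product measure). Then `E[T] ≥ 1/4`. -/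
theorem stmt18 (m : ℕ) (hm : 4 ≤ m) :
    (1 / 4 : ℝ) ≤
      ∫ p : ℝ × ℝ,
        (if |p.1| ≤ (m : ℝ) then |p.1| - p.2 / (2 * m) else -Real.sqrt ((m : ℝ) ^ 2 + p.2))
        ∂((gaussianReal 0 1).prod (chiSq (m - 1))) := by
  have hm1 : (1:ℕ) ≤ m := by omega
  set μ := gaussianReal 0 1 with hμ
  set ν := chiSq (m - 1) with hν
  set M : ℝ := (m : ℝ) with hMdef
  have hM4 : (4:ℝ) ≤ M := by rw [hMdef]; exact_mod_cast hm
  have hM0 : (0:ℝ) < M := by linarith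
  have hkR : ((m - 1 : ℕ) : ℝ) = M - 1 := by
    rw [hMdef, Nat.cast_sub hm1, Nat.cast_one]
  -- integrability of pieces
  have int_f1 : Integrable (fun n : ℝ => |n| - n ^ 4 / M ^ 3) μ :=
    integrable_gauss_abs.sub ((integrable_gauss_pow 4).div_const _)
  have int_g2 : Integrable (fun w : ℝ => -(w / (2 * M))) ν :=
    ((integrable_id_chiSq (m - 1)).div_const (2 * M)).neg
  have int_g3 : Integrable (fun w : ℝ => -((3 * M + w) / (2 * M ^ 4))) ν :=
    (((integrable_const (3 * M)).add (integrable_id_chiSq (m - 1))).div_const _).neg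
  have int1 : Integrable (fun p : ℝ × ℝ => (|p.1| - p.1 ^ 4 / M ^ 3) * 1) (μ.prod ν) :=
    int_f1.mul_prod (integrable_const 1)
  have int2 : Integrable (fun p : ℝ × ℝ => 1 * (-(p.2 / (2 * M)))) (μ.prod ν) :=
    (integrable_const 1).mul_prod int_g2
  have int3 : Integrable (fun p : ℝ × ℝ => p.1 ^ 4 * (-((3 * M + p.2) / (2 * M ^ 4))))
      (μ.prod ν) := (integrable_gauss_pow 4).mul_prod int_g3
  have int_G : Integrable (fun p : ℝ × ℝ => (|p.1| - p.1 ^ 4 / M ^ 3) * 1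
      + 1 * (-(p.2 / (2 * M))) + p.1 ^ 4 * (-((3 * M + p.2) / (2 * M ^ 4)))) (μ.prod ν) :=
    (int1.add int2).add int3
  -- a.e. nonnegativity of second coordinate
  have hae_w : ∀ᵐ p : ℝ × ℝ ∂(μ.prod ν), 0 ≤ p.2 := by
    rw [ae_iff]
    have hset : {p : ℝ × ℝ | ¬ 0 ≤ p.2} = Set.univ ×ˢ Set.Iio 0 := by
      ext p; simp [not_le]
    rw [hset, Measure.prod_prod]
    have hν0 : ν (Set.Iio 0) = 0 := by
      have := chiSq_nonneg (m - 1)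
      rw [ae_iff] at this
      convert this using 2
      ext w; simp [not_le]
    simp [hν0]
  -- integrability of T
  have meas_T : AEStronglyMeasurable (fun p : ℝ × ℝ =>
      if |p.1| ≤ M then |p.1| - p.2 / (2 * M) else -Real.sqrt (M ^ 2 + p.2)) (μ.prod ν) := by
    refine Measurable.aestronglyMeasurable ?_
    refine Measurable.ite (measurableSet_le measurable_fst.abs measurable_const) ?_ ?_
    · exact measurable_fst.abs.sub (measurable_snd.div_const _)
    · exact (Real.continuous_sqrt.measurable.comp (measurable_const.add measurable_snd)).neg
  have int_B : Integrable (fun p : ℝ × ℝ => |p.1| * 1 + 1 * (|p.2| + (M + 1))) (μ.prod ν) :=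
    (integrable_gauss_abs.mul_prod (integrable_const 1)).add
      ((integrable_const 1).mul_prod ((integrable_id_chiSq (m - 1)).abs.add (integrable_const _)))
  have int_T : Integrable (fun p : ℝ × ℝ =>
      if |p.1| ≤ M then |p.1| - p.2 / (2 * M) else -Real.sqrt (M ^ 2 + p.2)) (μ.prod ν) := by
    refine Integrable.mono' int_B meas_T ?_
    filter_upwards [hae_w] with p hw
    rw [Real.norm_eq_abs]
    by_cases h : |p.1| ≤ M
    · rw [if_pos h]
      have h1 : |(|p.1| - p.2 / (2 * M))| ≤ |(|p.1|)| + |p.2 / (2 * M)| := abs_sub _ _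
      rw [abs_abs, abs_div] at h1
      have h2 : |p.2| / |2 * M| ≤ |p.2| := by
        apply div_le_self (abs_nonneg _)
        rw [abs_of_nonneg (by linarith : (0:ℝ) ≤ 2 * M)]
        linarith
      have h3 : 0 ≤ |p.2| := abs_nonneg _
      nlinarith [abs_nonneg p.1]
    · rw [if_neg h]
      have hsq : Real.sqrt (M ^ 2 + p.2) ≤ M + 1 + p.2 := by
        have hle : M ^ 2 + p.2 ≤ (M + 1 + p.2) ^ 2 := by nlinarith
        calc Real.sqrt (M ^ 2 + p.2) ≤ Real.sqrt ((M + 1 + p.2) ^ 2) := Real.sqrt_le_sqrt hle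
          _ = M + 1 + p.2 := Real.sqrt_sq (by linarith)
      rw [abs_neg, abs_of_nonneg (Real.sqrt_nonneg _)]
      rw [abs_of_nonneg hw]
      nlinarith [abs_nonneg p.1]
  -- pointwise a.e. comparison
  have hGT : (fun p : ℝ × ℝ => (|p.1| - p.1 ^ 4 / M ^ 3) * 1
      + 1 * (-(p.2 / (2 * M))) + p.1 ^ 4 * (-((3 * M + p.2) / (2 * M ^ 4))))
      ≤ᵐ[μ.prod ν] (fun p : ℝ × ℝ =>
      if |p.1| ≤ M then |p.1| - p.2 / (2 * M) else -Real.sqrt (M ^ 2 + p.2)) := by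
    filter_upwards [hae_w] with p hw
    set n := p.1
    set w := p.2
    by_cases h : |n| ≤ M
    · rw [if_pos h]
      have h1 : 0 ≤ n ^ 4 / M ^ 3 := by positivity
      have h2 : 0 ≤ n ^ 4 * ((3 * M + w) / (2 * M ^ 4)) := by
        apply mul_nonneg (by positivity)
        apply div_nonneg (by linarith) (by positivity)
      nlinarith [h1, h2]
    · rw [if_neg h]
      push_neg at h
      have h3' : M ^ 3 ≤ |n| ^ 3 := pow_le_pow_left₀ hM0.le h.le 3
      have ha4 : M ^ 3 * |n| ≤ |n| ^ 4 := by
        have := mul_le_mul_of_nonneg_right h3' (abs_nonneg n)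
        nlinarith [this]
      have hn4 : n ^ 4 = |n| ^ 4 := (abs_pow4 n).symm
      have h5 : |n| ≤ n ^ 4 / M ^ 3 := by
        rw [le_div_iff₀ (by positivity)]
        rw [hn4]; linarith
      have hMa : M ^ 4 ≤ n ^ 4 := by
        rw [hn4]
        have := pow_le_pow_left₀ (by linarith : (0:ℝ) ≤ M) h.le 4
        exact this
      have h6 : (3 * M + w) / 2 ≤ n ^ 4 * ((3 * M + w) / (2 * M ^ 4)) := by
        have hq : (3 * M + w) / 2 = M ^ 4 * ((3 * M + w) / (2 * M ^ 4)) := by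
          field_simp
        rw [hq]
        exact mul_le_mul_of_nonneg_right hMa
          (div_nonneg (by linarith) (by positivity))
      have hsq2 : Real.sqrt (M ^ 2 + w) ≤ (3 * M + w) / 2 := by
        have hle : M ^ 2 + w ≤ ((3 * M + w) / 2) ^ 2 := by nlinarith
        calc Real.sqrt (M ^ 2 + w) ≤ Real.sqrt (((3 * M + w) / 2) ^ 2) := Real.sqrt_le_sqrt hle
          _ = (3 * M + w) / 2 := Real.sqrt_sq (by linarith)
      have h7 : 0 ≤ w / (2 * M) := div_nonneg hw (by linarith)
      nlinarith [h5, h6, hsq2, h7]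
  -- value of ∫ G
  have hA := Eabs_ge
  set A : ℝ := ∫ x, |x| ∂(gaussianReal 0 1) with hAdef
  have hG_eq : ∫ p : ℝ × ℝ, ((|p.1| - p.1 ^ 4 / M ^ 3) * 1
      + 1 * (-(p.2 / (2 * M))) + p.1 ^ 4 * (-((3 * M + p.2) / (2 * M ^ 4)))) ∂(μ.prod ν)
      = (A - 3 / M ^ 3) * 1 + 1 * (-((M - 1) / (2 * M)))
        + 3 * (-((3 * M + (M - 1)) / (2 * M ^ 4))) := by
    have int12 : Integrable (fun p : ℝ × ℝ => (|p.1| - p.1 ^ 4 / M ^ 3) * 1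
        + 1 * (-(p.2 / (2 * M)))) (μ.prod ν) := int1.add int2
    have p1 := integral_prod_mul (μ := μ) (ν := ν)
      (f := fun n : ℝ => |n| - n ^ 4 / M ^ 3) (g := fun _ : ℝ => (1:ℝ))
    have p2 := integral_prod_mul (μ := μ) (ν := ν)
      (f := fun _ : ℝ => (1:ℝ)) (g := fun w : ℝ => -(w / (2 * M)))
    have p3 := integral_prod_mul (μ := μ) (ν := ν)
      (f := fun n : ℝ => n ^ 4) (g := fun w : ℝ => -((3 * M + w) / (2 * M ^ 4)))
    rw [integral_add int12 int3, integral_add int1 int2, p1, p2, p3]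
    have e1 : ∫ n : ℝ, (|n| - n ^ 4 / M ^ 3) ∂μ = A - 3 / M ^ 3 := by
      rw [integral_sub integrable_gauss_abs ((integrable_gauss_pow 4).div_const _),
        integral_div, E4]
    have e2 : ∫ _ : ℝ, (1:ℝ) ∂ν = 1 := by simp
    have e3 : ∫ _ : ℝ, (1:ℝ) ∂μ = 1 := by simp
    have e4 : ∫ w : ℝ, -(w / (2 * M)) ∂ν = -((M - 1) / (2 * M)) := by
      rw [integral_neg, integral_div, hν, integral_id_chiSq, hkR]
    have e5 : ∫ n : ℝ, n ^ 4 ∂μ = 3 := E4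
    have e6 : ∫ w : ℝ, -((3 * M + w) / (2 * M ^ 4)) ∂ν = -((3 * M + (M - 1)) / (2 * M ^ 4)) := by
      rw [integral_neg, integral_div,
        integral_add (integrable_const _) (integrable_id_chiSq (m - 1)),
        integral_id_chiSq, hkR, integral_const]
      simp
    rw [e1, e2, e3, e4, e5, e6]
  -- combine
  calc (1/4 : ℝ) ≤ (A - 3 / M ^ 3) * 1 + 1 * (-((M - 1) / (2 * M)))
        + 3 * (-((3 * M + (M - 1)) / (2 * M ^ 4))) := by
        have hM3 : (0:ℝ) < M ^ 3 := by positivity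
        have hMM : (0:ℝ) < 16 * M := by linarith
        have hMsq : (16:ℝ) ≤ M * M := by nlinarith [hM4]
        have h1 : 3 / M ^ 3 ≤ 3 / (16 * M) := by
          rw [div_le_div_iff₀ hM3 hMM]
          nlinarith [mul_le_mul_of_nonneg_right hMsq hM0.le]
        have h2 : (M - 1) / (2 * M) = 1 / 2 - 1 / (2 * M) := by
          field_simp
        have h3 : 3 * ((3 * M + (M - 1)) / (2 * M ^ 4)) ≤ 6 / (16 * M) := by
          rw [mul_div_assoc', div_le_div_iff₀ (by positivity) hMM]
          have hp : 16 * (M * M) ≤ M ^ 4 := by nlinarith [hMsq, mul_le_mul_of_nonneg_right hMsq (mul_nonneg hM0.le hM0.le)]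
          nlinarith [hp, hM0, hMsq]
        have h4 : 3 / (16 * M) + 6 / (16 * M) - 1 / (2 * M) ≤ 1 / 64 := by
          rw [← add_div, show (3:ℝ) + 6 = 9 from by norm_num]
          rw [show (9:ℝ) / (16 * M) - 1 / (2 * M) = 1 / (16 * M) by field_simp; ring]
          rw [div_le_div_iff₀ hMM (by norm_num : (0:ℝ) < 64)]
          linarith
        nlinarith [hA, h1, h2, h3, h4]
    _ = ∫ p : ℝ × ℝ, ((|p.1| - p.1 ^ 4 / M ^ 3) * 1
        + 1 * (-(p.2 / (2 * M))) + p.1 ^ 4 * (-((3 * M + p.2) / (2 * M ^ 4)))) ∂(μ.prod ν) :=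
        hG_eq.symm
    _ ≤ _ := integral_mono_ae int_G int_T hGT
end
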